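/- For all integers n ≥ 3 and 2 ≤ k ≤ n−1, the sum of (−1)^{|E|} over all sets E of 2-element subsets of [n] = {1,…,n} such that the graph ([n], E) is not 2-connected and every edge of E containing the vertex 1 has its other endpoint in {2,…,k}, equals 0. (This is the Euler-characteristic consequence of the lemma that the complex Δ(k) of such graphs is contractible.) -/

import Mathlib

open Finset

/-- The simple graph on `Fin n` determined by a set `E` of edges (2-element subsets).
Vertex `i ∈ [n] = {1,…,n}` is represented by `(⟨i-1, _⟩ : Fin n)`. -/
def graphOf (n : ℕ) (E : Finset (Finset (Fin n))) : SimpleGraph (Fin n) where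
  Adj u v := u ≠ v ∧ ({u, v} : Finset (Fin n)) ∈ E
  symm := ⟨by
    rintro u v ⟨h1, h2⟩
    exact ⟨h1.symm, by rwa [Finset.pair_comm]⟩⟩
  loopless := ⟨fun u h => h.1 rfl⟩

/-- `E` is a set of 2-element subsets of `[n]`. -/
def IsGraphEdges (n : ℕ) (E : Finset (Finset (Fin n))) : Prop := ∀ e ∈ E, e.card = 2

/-- A graph on a finite vertex type is 2-connected. -/
def IsTwoConn {V : Type} [Fintype V] (G : SimpleGraph V) : Prop :=
  2 ≤ Fintype.card V ∧ G.Connected ∧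
    ∀ v : V, (G.induce ({v}ᶜ : Set V)).Connected

namespace TCaux

variable {α : Type} [DecidableEq α]

/-- adjacency determined by an edge finset -/
def adjE (E : Finset (Finset α)) (a b : α) : Prop := a ≠ b ∧ ({a, b} : Finset α) ∈ E

/-- one step within vertex set s -/
def stepR (E : Finset (Finset α)) (s : Finset α) (a b : α) : Prop :=
  a ∈ s ∧ b ∈ s ∧ adjE E a b

/-- reachability within s -/
def reachE (E : Finset (Finset α)) (s : Finset α) : α → α → Prop :=
  Relation.ReflTransGen (stepR E s)

/-- connectivity of the graph induced on s -/
def connE (E : Finset (Finset α)) (s : Finset α) : Prop :=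
  s.Nonempty ∧ ∀ u ∈ s, ∀ v ∈ s, reachE E s u v

/-- 2-connectivity of the graph induced on s -/
def tcE (E : Finset (Finset α)) (s : Finset α) : Prop :=
  2 ≤ s.card ∧ connE E s ∧ ∀ v ∈ s, connE E (s.erase v)

lemma adjE_symm {E : Finset (Finset α)} {a b : α} (h : adjE E a b) : adjE E b a :=
  ⟨h.1.symm, by rw [Finset.pair_comm]; exact h.2⟩

lemma adjE_mono {E E' : Finset (Finset α)} (hEE : E ⊆ E') {a b : α} (h : adjE E a b) :
    adjE E' a b := ⟨h.1, hEE h.2⟩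

lemma stepR_symm {E : Finset (Finset α)} {s : Finset α} : Symmetric (stepR E s) :=
  fun _ _ h => ⟨h.2.1, h.1, adjE_symm h.2.2⟩

lemma reachE_symm {E : Finset (Finset α)} {s : Finset α} {a b : α}
    (h : reachE E s a b) : reachE E s b a :=
  (@Relation.ReflTransGen.stdSymm _ (stepR E s) ⟨fun _ _ h' => stepR_symm h'⟩).symm _ _ h

lemma reachE_mono {E E' : Finset (Finset α)} {s s' : Finset α} (hE : E ⊆ E') (hs : s ⊆ s')
    {a b : α} (h : reachE E s a b) : reachE E' s' a b :=
  (Relation.ReflTransGen.mono (r := stepR E s) (p := stepR E' s') (fun x y (hxy : stepR E s x y) => (⟨hs hxy.1, hs hxy.2.1, adjE_mono hE hxy.2.2⟩ : stepR E' s' x y))) a b h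

lemma reachE_trans {E : Finset (Finset α)} {s : Finset α} {a b c : α}
    (h : reachE E s a b) (h' : reachE E s b c) : reachE E s a c := h.trans h'

lemma reachE_single {E : Finset (Finset α)} {s : Finset α} {a b : α}
    (ha : a ∈ s) (hb : b ∈ s) (h : adjE E a b) : reachE E s a b :=
  Relation.ReflTransGen.single ⟨ha, hb, h⟩

/-- endpoints of a nontrivial reach are in s; more precisely target is in s if start reached
something else; we mostly use membership from context. -/
lemma reachE_mem_right {E : Finset (Finset α)} {s : Finset α} {a b : α}
    (h : reachE E s a b) (hne : a ≠ b) : b ∈ s := by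
  induction h with
  | refl => exact absurd rfl hne
  | tail _ hstep _ => exact hstep.2.1

/-- an edge of a graph which contains no member edge through r cannot start at r -/
lemma reachE_first_step {E : Finset (Finset α)} {s : Finset α} {a b : α}
    (h : reachE E s a b) (hne : a ≠ b) : ∃ c, stepR E s a c := by
  rcases h.cases_head with h' | ⟨c, hc, _⟩
  · exact absurd h' hne
  · exact ⟨c, hc⟩

/-- unusable edge: if one endpoint of f is outside s, inserting f changes nothing -/
lemma reachE_insert_unusable {E : Finset (Finset α)} {s : Finset α} {x y : α}
    (hy : y ∉ s) {a b : α} (h : reachE (insert ({x, y} : Finset α) E) s a b) :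
    reachE E s a b := by
  induction h with
  | refl => exact .refl
  | tail _ hstep ih =>
    rename_i b' c' _
    refine ih.tail ⟨hstep.1, hstep.2.1, hstep.2.2.1, ?_⟩
    rcases Finset.mem_insert.mp hstep.2.2.2 with he | he
    · exfalso
      have : y ∈ ({b', c'} : Finset α) := he ▸ (by simp : y ∈ ({x, y} : Finset α))
      rcases Finset.mem_insert.mp this with h1 | h1
      · exact hy (h1 ▸ hstep.1)
      · exact hy ((Finset.mem_singleton.mp h1) ▸ hstep.2.1)
    · exact he

lemma connE_mono_E {E E' : Finset (Finset α)} {s : Finset α} (hE : E ⊆ E')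
    (h : connE E s) : connE E' s :=
  ⟨h.1, fun u hu v hv => reachE_mono hE (le_refl s) (h.2 u hu v hv)⟩

/-- connectivity via a hub vertex -/
lemma connE_of_hub {E : Finset (Finset α)} {s : Finset α} {w : α} (hw : w ∈ s)
    (h : ∀ u ∈ s, reachE E s u w) : connE E s :=
  ⟨⟨w, hw⟩, fun u hu v hv => (h u hu).trans (reachE_symm (h v hv))⟩

lemma connE_union {E : Finset (Finset α)} {s t : Finset α} {w : α}
    (hs : connE E s) (ht : connE E t) (hws : w ∈ s) (hwt : w ∈ t) :
    connE E (s ∪ t) := by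
  refine connE_of_hub (Finset.mem_union_left _ hws) ?_
  intro u hu
  rcases Finset.mem_union.mp hu with h | h
  · exact reachE_mono (le_refl E) Finset.subset_union_left (hs.2 u h w hws)
  · exact reachE_mono (le_refl E) Finset.subset_union_right (ht.2 u h w hwt)

/-- restrict to the subgraph of edges inside S -/
lemma reachE_filter_iff {E : Finset (Finset α)} {s S : Finset α} (hsS : s ⊆ S) {a b : α} :
    reachE E s a b ↔ reachE (E.filter (fun e => e ⊆ S)) s a b := by
  constructor
  · intro h
    induction h with
    | refl => exact .refl
    | tail _ hstep ih =>
      refine ih.tail ⟨hstep.1, hstep.2.1, hstep.2.2.1, Finset.mem_filter.mpr ⟨hstep.2.2.2, ?_⟩⟩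
      intro z hz
      rcases Finset.mem_insert.mp hz with h1 | h1
      · exact hsS (h1 ▸ hstep.1)
      · exact hsS ((Finset.mem_singleton.mp h1) ▸ hstep.2.1)
  · exact fun h => reachE_mono (Finset.filter_subset _ _) (le_refl s) h

lemma connE_filter_iff {E : Finset (Finset α)} {s S : Finset α} (hsS : s ⊆ S) :
    connE E s ↔ connE (E.filter (fun e => e ⊆ S)) s := by
  unfold connE
  simp only [and_congr_right_iff]
  intro _
  constructor
  · intro h u hu v hv; exact (reachE_filter_iff hsS).mp (h u hu v hv)
  · intro h u hu v hv; exact (reachE_filter_iff hsS).mpr (h u hu v hv)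

/-- closure: if A is closed under adjacency within s, reach stays in A -/
lemma reachE_closed {E : Finset (Finset α)} {s A : Finset α}
    (hcl : ∀ a ∈ A, ∀ b ∈ s, adjE E a b → b ∈ A) {u v : α}
    (hu : u ∈ A) (h : reachE E s u v) : v ∈ A := by
  induction h with
  | refl => exact hu
  | tail _ hstep ih => exact hcl _ ih _ hstep.2.1 hstep.2.2

/-- exit lemma: a walk from inside A to outside A uses a boundary edge -/
lemma reachE_exit {E : Finset (Finset α)} {s A : Finset α} {u v : α}
    (h : reachE E s u v) (hu : u ∈ A) (hv : v ∉ A) :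
    ∃ a ∈ A, ∃ b ∈ s, b ∉ A ∧ adjE E a b := by
  induction h with
  | refl => exact absurd hu hv
  | @tail p q hp hstep ih =>
    by_cases hb : p ∈ A
    · exact ⟨p, hb, q, hstep.2.1, hv, hstep.2.2⟩
    · exact ih hb

/-- splitting a walk in (E + rt): endpoints reach r or t in E alone -/
lemma reachE_insert_split {E : Finset (Finset α)} {s : Finset α} {r t : α}
    {x : α} (h : reachE (insert ({r, t} : Finset α) E) s r x) :
    reachE E s x r ∨ reachE E s x t := by
  induction h with
  | refl => exact Or.inl .refl
  | @tail p q hp hstep ih =>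
    rcases Finset.mem_insert.mp hstep.2.2.2 with he | he
    · have hc : q ∈ ({r, t} : Finset α) := he ▸ (by simp : q ∈ ({p, q} : Finset α))
      rcases Finset.mem_insert.mp hc with h1 | h1
      · exact Or.inl (h1 ▸ Relation.ReflTransGen.refl)
      · exact Or.inr ((Finset.mem_singleton.mp h1) ▸ Relation.ReflTransGen.refl)
    · have hstep' : reachE E s q p :=
        reachE_single hstep.2.1 hstep.1 (adjE_symm ⟨hstep.2.2.1, he⟩)
      rcases ih with h' | h'
      · exact Or.inl (hstep'.trans h')
      · exact Or.inr (hstep'.trans h')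

/-- substitution: if every step implies reach in another graph/set, reach transfers -/
lemma reachE_sub {E Y : Finset (Finset α)} {s s2 : Finset α}
    (h : ∀ a b, stepR E s a b → reachE Y s2 a b) {x y : α}
    (hxy : reachE E s x y) : reachE Y s2 x y := by
  induction hxy with
  | refl => exact .refl
  | tail _ hstep ih => exact ih.trans (h _ _ hstep)

/-- confinement lemma (W) -/
lemma reachE_confine {E : Finset (Finset α)} {s A : Finset α} {c0 : α}
    (hA : A ⊆ s) (hc : c0 ∈ s)
    (hcl : ∀ a ∈ A, ∀ b ∈ s, adjE E a b → b ∈ A ∨ b = c0)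
    {x y : α} (hx : x ∈ insert c0 A) (h : reachE E s x y) :
    (y ∈ insert c0 A → reachE E (insert c0 A) x y) ∧
    (y ∉ insert c0 A → reachE E (insert c0 A) x c0) := by
  induction h with
  | refl => exact ⟨fun _ => .refl, fun hy => absurd hx hy⟩
  | @tail p q hp hstep ih =>
    by_cases hb : p ∈ insert c0 A
    · have ihr := ih.1 hb
      by_cases hcin : q ∈ insert c0 A
      · exact ⟨fun _ => ihr.tail ⟨hb, hcin, hstep.2.2⟩, fun h' => absurd hcin h'⟩
      · rcases Finset.mem_insert.mp hb with hbc | hbA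
        · exact ⟨fun h' => absurd h' hcin, fun _ => hbc ▸ ihr⟩
        · exfalso
          rcases hcl _ hbA _ hstep.2.1 hstep.2.2 with h1 | h1
          · exact hcin (Finset.mem_insert_of_mem h1)
          · exact hcin (Finset.mem_insert.mpr (Or.inl h1))
    · have ihc := ih.2 hb
      by_cases hcin : q ∈ insert c0 A
      · rcases Finset.mem_insert.mp hcin with hcc | hcA
        · exact ⟨fun _ => hcc ▸ ihc, fun h' => absurd hcin h'⟩
        · exfalso
          rcases hcl _ hcA _ hstep.1 (adjE_symm hstep.2.2) with h1 | h1
          · exact hb (Finset.mem_insert_of_mem h1)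
          · exact hb (Finset.mem_insert.mpr (Or.inl h1))
      · exact ⟨fun h' => absurd h' hcin, fun _ => ihc⟩

open scoped Classical in
/-- component of w inside s -/
noncomputable def rcomp (E : Finset (Finset α)) (s : Finset α) (w : α) : Finset α :=
  s.filter (fun x => reachE E s w x)

lemma mem_rcomp {E : Finset (Finset α)} {s : Finset α} {w x : α} :
    x ∈ rcomp E s w ↔ x ∈ s ∧ reachE E s w x := by
  simp [rcomp]

lemma self_mem_rcomp {E : Finset (Finset α)} {s : Finset α} {w : α} (hw : w ∈ s) :
    w ∈ rcomp E s w := mem_rcomp.mpr ⟨hw, .refl⟩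

lemma rcomp_subset {E : Finset (Finset α)} {s : Finset α} {w : α} :
    rcomp E s w ⊆ s := fun x hx => (mem_rcomp.mp hx).1

lemma rcomp_closed {E : Finset (Finset α)} {s : Finset α} {w : α} :
    ∀ a ∈ rcomp E s w, ∀ b ∈ s, adjE E a b → b ∈ rcomp E s w := by
  intro a ha b hb hab
  rcases mem_rcomp.mp ha with ⟨has, hra⟩
  exact mem_rcomp.mpr ⟨hb, hra.tail ⟨has, hb, hab⟩⟩

/-- reach from w stays inside the component of w -/
lemma reachE_rcomp {E : Finset (Finset α)} {s : Finset α} {w x : α}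
    (hw : w ∈ s) (h : reachE E s w x) : reachE E (rcomp E s w) w x := by
  induction h with
  | refl => exact .refl
  | @tail p q hp hstep ih =>
    have hb : p ∈ rcomp E s w := mem_rcomp.mpr ⟨hstep.1, hp⟩
    have hc : q ∈ rcomp E s w := mem_rcomp.mpr ⟨hstep.2.1, hp.tail hstep⟩
    exact ih.tail ⟨hb, hc, hstep.2.2⟩

lemma connE_rcomp {E : Finset (Finset α)} {s : Finset α} {w : α} (hw : w ∈ s) :
    connE E (rcomp E s w) := by
  refine connE_of_hub (self_mem_rcomp hw) ?_
  intro u hu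
  exact reachE_symm (reachE_rcomp hw (mem_rcomp.mp hu).2)

lemma reachE_insert_unusable' {E : Finset (Finset α)} {s : Finset α} {x y : α}
    (hx : x ∉ s) {a b : α} (h : reachE (insert ({x, y} : Finset α) E) s a b) :
    reachE E s a b := by
  rw [Finset.pair_comm] at h
  exact reachE_insert_unusable hx h

lemma connE_insert_unusable {E : Finset (Finset α)} {s : Finset α} {x y : α}
    (hxy : x ∉ s ∨ y ∉ s) (h : connE (insert ({x, y} : Finset α) E) s) : connE E s := by
  refine ⟨h.1, fun u hu v hv => ?_⟩
  rcases hxy with hx | hy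
  · exact reachE_insert_unusable' hx (h.2 u hu v hv)
  · exact reachE_insert_unusable hy (h.2 u hu v hv)

/-- confinement lemma for walks in E+rt, rerouted into E+ct -/
lemma reachE_confine2 {E : Finset (Finset α)} {s A : Finset α} {c0 r t : α}
    (hA : A ⊆ s) (hc : c0 ∈ s) (htA : t ∈ A) (hr : r ∉ A) (hrc : r ≠ c0) (hct : c0 ≠ t)
    (hcl : ∀ a ∈ A, ∀ b ∈ s, adjE E a b → b ∈ A ∨ b = c0)
    {x y : α} (hx : x ∈ insert c0 A) (h : reachE (insert ({r, t} : Finset α) E) s x y) :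
    (y ∈ insert c0 A → reachE (insert ({c0, t} : Finset α) E) (insert c0 A) x y) ∧
    (y ∉ insert c0 A → reachE (insert ({c0, t} : Finset α) E) (insert c0 A) x c0) := by
  have hctmem : ({c0, t} : Finset α) ∈ insert ({c0, t} : Finset α) E := Finset.mem_insert_self _ _
  have hcA : c0 ∈ insert c0 A := Finset.mem_insert_self _ _
  have htA' : t ∈ insert c0 A := Finset.mem_insert_of_mem htA
  have stepct : stepR (insert ({c0, t} : Finset α) E) (insert c0 A) c0 t :=
    ⟨hcA, htA', hct, hctmem⟩
  induction h with
  | refl => exact ⟨fun _ => .refl, fun hy => absurd hx hy⟩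
  | @tail p q hp hstep ih =>
    rcases Finset.mem_insert.mp hstep.2.2.2 with he | he
    · -- the rt edge
      have hpm : p ∈ ({r, t} : Finset α) := he ▸ (by simp : p ∈ ({p, q} : Finset α))
      have hqm : q ∈ ({r, t} : Finset α) := he ▸ (by simp : q ∈ ({p, q} : Finset α))
      have hpq : p ≠ q := hstep.2.2.1
      rcases Finset.mem_insert.mp hpm with hp1 | hp1 <;>
        rcases Finset.mem_insert.mp hqm with hq1 | hq1
      · exact absurd (hp1.trans hq1.symm) hpq
      · -- p = r, q = t
        subst hp1
        have hq1' := Finset.mem_singleton.mp hq1; subst hq1'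
        have hpA : p ∉ insert c0 A := by
          intro hmem
          rcases Finset.mem_insert.mp hmem with h1 | h1
          · exact hrc h1
          · exact hr h1
        have ihc := ih.2 hpA
        exact ⟨fun _ => ihc.tail stepct, fun h' => absurd htA' h'⟩
      · -- p = t, q = r
        have hp1' := Finset.mem_singleton.mp hp1; subst hp1'
        subst hq1
        have ihr := ih.1 htA'
        have hqA : q ∉ insert c0 A := by
          intro hmem
          rcases Finset.mem_insert.mp hmem with h1 | h1
          · exact hrc h1
          · exact hr h1
        refine ⟨fun h' => absurd h' hqA, fun _ => ihr.tail (stepR_symm stepct)⟩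
      · have hp1' := Finset.mem_singleton.mp hp1
        have hq1' := Finset.mem_singleton.mp hq1
        exact absurd (hp1'.trans hq1'.symm) hpq
    · -- a genuine E-edge
      by_cases hb : p ∈ insert c0 A
      · by_cases hq : q ∈ insert c0 A
        · exact ⟨fun _ => (ih.1 hb).tail ⟨hb, hq, hstep.2.2.1, Finset.mem_insert_of_mem he⟩,
            fun h' => absurd hq h'⟩
        · rcases Finset.mem_insert.mp hb with hbc | hbA
          · exact ⟨fun h' => absurd h' hq, fun _ => hbc ▸ (ih.1 hb)⟩
          · exfalso
            rcases hcl _ hbA _ hstep.2.1 ⟨hstep.2.2.1, he⟩ with h1 | h1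
            · exact hq (Finset.mem_insert_of_mem h1)
            · exact hq (Finset.mem_insert.mpr (Or.inl h1))
      · have ihc := ih.2 hb
        by_cases hq : q ∈ insert c0 A
        · rcases Finset.mem_insert.mp hq with hqc | hqA
          · exact ⟨fun _ => hqc ▸ ihc, fun h' => absurd hq h'⟩
          · exfalso
            rcases hcl _ hqA _ hstep.1 (adjE_symm ⟨hstep.2.2.1, he⟩) with h1 | h1
            · exact hb (Finset.mem_insert_of_mem h1)
            · exact hb (Finset.mem_insert.mpr (Or.inl h1))
        · exact ⟨fun h' => absurd h' hq, fun _ => ihc⟩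

open scoped Classical in
/-- the set of cut vertices -/
noncomputable def cuts (E : Finset (Finset α)) (V : Finset α) : Finset α :=
  V.filter (fun c => ¬ connE E (V.erase c))

lemma mem_cuts {E : Finset (Finset α)} {V : Finset α} {c : α} :
    c ∈ cuts E V ↔ c ∈ V ∧ ¬ connE E (V.erase c) := by simp [cuts]

/-- standing context for graphs in the leftover family L -/
structure LCtx (V : Finset α) (r t : α) (E : Finset (Finset α)) : Prop where
  hrV : r ∈ V
  htV : t ∈ V
  hrt : r ≠ t
  hcard : 3 ≤ V.card
  hE : ∀ e ∈ E, e.card = 2 ∧ e ⊆ V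
  hrtE : ({r, t} : Finset α) ∉ E
  hntc : ¬ tcE E V
  htc2 : tcE (insert ({r, t} : Finset α) E) V

namespace LCtx

variable {V : Finset α} {r t : α} {E : Finset (Finset α)}

lemma connr (h : LCtx V r t E) : connE E (V.erase r) := by
  have := h.htc2.2.2 r h.hrV
  exact connE_insert_unusable (Or.inl (Finset.notMem_erase r V)) this

lemma connt (h : LCtx V r t E) : connE E (V.erase t) := by
  have := h.htc2.2.2 t h.htV
  exact connE_insert_unusable (Or.inr (Finset.notMem_erase t V)) this

lemma connV (h : LCtx V r t E) : connE E V := by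
  obtain ⟨w, hwV, hwr, hwt⟩ : ∃ w ∈ V, w ≠ r ∧ w ≠ t := by
    have h2 : ({r, t} : Finset α).card ≤ 2 := Finset.card_insert_le _ _ |>.trans (by simp)
    have : ¬ (V ⊆ {r, t}) := by
      intro hsub
      have h3 := le_trans (Finset.card_le_card hsub) h2
      have := h.hcard
      omega
    obtain ⟨w, hwV, hw⟩ := Finset.not_subset.mp this
    simp only [Finset.mem_insert, Finset.mem_singleton, not_or] at hw
    exact ⟨w, hwV, hw.1, hw.2⟩
  have h1 : V.erase r ∪ V.erase t = V := by
    ext x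
    simp only [Finset.mem_union, Finset.mem_erase]
    constructor
    · rintro (⟨_, hx⟩ | ⟨_, hx⟩) <;> exact hx
    · intro hx
      by_cases hxr : x = r
      · exact Or.inr ⟨hxr ▸ h.hrt, hx⟩
      · exact Or.inl ⟨hxr, hx⟩
  have := connE_union (w := w) h.connr h.connt
    (Finset.mem_erase.mpr ⟨hwr, hwV⟩) (Finset.mem_erase.mpr ⟨hwt, hwV⟩)
  rwa [h1] at this

lemma cuts_nonempty (h : LCtx V r t E) : (cuts E V).Nonempty := by
  by_contra hne
  apply h.hntc
  have hc3 := h.hcard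
  refine ⟨by omega, h.connV, fun v hv => ?_⟩
  by_contra hc
  exact hne ⟨v, mem_cuts.mpr ⟨hv, hc⟩⟩

lemma cut_ne_r (h : LCtx V r t E) {c : α} (hc : c ∈ cuts E V) : c ≠ r := by
  rintro rfl; exact (mem_cuts.mp hc).2 h.connr

lemma cut_ne_t (h : LCtx V r t E) {c : α} (hc : c ∈ cuts E V) : c ≠ t := by
  rintro rfl; exact (mem_cuts.mp hc).2 h.connt

/-- the two sides of a cut vertex -/
lemma cut_cover (h : LCtx V r t E) {c : α} (hc : c ∈ cuts E V) {x : α} (hx : x ∈ V.erase c) :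
    x ∈ rcomp E (V.erase c) r ∨ x ∈ rcomp E (V.erase c) t := by
  obtain ⟨hcV, hncut⟩ := mem_cuts.mp hc
  have hrs' : r ∈ V.erase c := Finset.mem_erase.mpr ⟨fun he => (h.cut_ne_r hc) he.symm, h.hrV⟩
  have hconn := h.htc2.2.2 c hcV
  have hreach := hconn.2 r hrs' x hx
  rcases reachE_insert_split hreach with h' | h'
  · exact Or.inl (mem_rcomp.mpr ⟨hx, reachE_symm h'⟩)
  · exact Or.inr (mem_rcomp.mpr ⟨hx, reachE_symm h'⟩)

lemma cut_disj (h : LCtx V r t E) {c : α} (hc : c ∈ cuts E V) :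
    ∀ x, x ∈ rcomp E (V.erase c) r → x ∈ rcomp E (V.erase c) t → False := by
  intro x hxr hxt
  obtain ⟨hcV, hncut⟩ := mem_cuts.mp hc
  apply hncut
  have hrs : r ∈ V.erase c := Finset.mem_erase.mpr ⟨fun he => (h.cut_ne_r hc) he.symm, h.hrV⟩
  refine connE_of_hub hrs ?_
  intro u hu
  rcases h.cut_cover hc hu with h' | h'
  · exact reachE_symm (mem_rcomp.mp h').2
  · -- u reaches t, and t reaches x reaches r
    have h1 : reachE E (V.erase c) t r :=
      ((mem_rcomp.mp hxt).2).trans (reachE_symm (mem_rcomp.mp hxr).2)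
    exact (reachE_symm (mem_rcomp.mp h').2).trans h1

lemma r_mem_rcomp (h : LCtx V r t E) {c : α} (hc : c ∈ cuts E V) :
    r ∈ rcomp E (V.erase c) r :=
  self_mem_rcomp (Finset.mem_erase.mpr ⟨fun he => (h.cut_ne_r hc) he.symm, h.hrV⟩)

lemma t_mem_tcomp (h : LCtx V r t E) {c : α} (hc : c ∈ cuts E V) :
    t ∈ rcomp E (V.erase c) t :=
  self_mem_rcomp (Finset.mem_erase.mpr ⟨fun he => (h.cut_ne_t hc) he.symm, h.htV⟩)

/-- adjacency from the graph: edges give adjE with both endpoints in V -/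
lemma adj_mem (h : LCtx V r t E) {a b : α} (hab : adjE E a b) : a ∈ V ∧ b ∈ V := by
  obtain ⟨hne, hmem⟩ := hab
  have := (h.hE _ hmem).2
  constructor
  · exact this (by simp)
  · exact this (by simp)

/-- nesting sub-lemma: if c2 avoids the r-side of c1, the r-sides are nested -/
lemma rcomp_sub (h : LCtx V r t E) {c1 c2 : α} (hc1 : c1 ∈ cuts E V) (hc2 : c2 ∈ cuts E V)
    (hn : c2 ∉ rcomp E (V.erase c1) r) :
    rcomp E (V.erase c1) r ⊆ rcomp E (V.erase c2) r := by
  intro x hx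
  have hreach := reachE_rcomp (s := V.erase c1)
    (Finset.mem_erase.mpr ⟨fun he => (h.cut_ne_r hc1) he.symm, h.hrV⟩) (mem_rcomp.mp hx).2
  have hsub : rcomp E (V.erase c1) r ⊆ V.erase c2 := by
    intro y hy
    refine Finset.mem_erase.mpr ⟨fun he => hn (he ▸ hy), ?_⟩
    exact Finset.mem_of_mem_erase (rcomp_subset hy)
  refine mem_rcomp.mpr ⟨hsub hx, reachE_mono (le_refl E) hsub hreach⟩

lemma tcomp_sub (h : LCtx V r t E) {c1 c2 : α} (hc1 : c1 ∈ cuts E V) (hc2 : c2 ∈ cuts E V)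
    (hn : c2 ∉ rcomp E (V.erase c1) t) :
    rcomp E (V.erase c1) t ⊆ rcomp E (V.erase c2) t := by
  intro x hx
  have hreach := reachE_rcomp (s := V.erase c1)
    (Finset.mem_erase.mpr ⟨fun he => (h.cut_ne_t hc1) he.symm, h.htV⟩) (mem_rcomp.mp hx).2
  have hsub : rcomp E (V.erase c1) t ⊆ V.erase c2 := by
    intro y hy
    refine Finset.mem_erase.mpr ⟨fun he => hn (he ▸ hy), ?_⟩
    exact Finset.mem_of_mem_erase (rcomp_subset hy)
  refine mem_rcomp.mpr ⟨hsub hx, reachE_mono (le_refl E) hsub hreach⟩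

/-- equal r-sides for distinct cuts is impossible -/
lemma rcomp_ne (h : LCtx V r t E) {c1 c2 : α} (hc1 : c1 ∈ cuts E V) (hc2 : c2 ∈ cuts E V)
    (hne : c1 ≠ c2) : rcomp E (V.erase c1) r ≠ rcomp E (V.erase c2) r := by
  intro heq
  set C := rcomp E (V.erase c1) r with hC
  have hcl : ∀ a ∈ C, ∀ b ∈ V, adjE E a b → b ∈ C := by
    intro a ha b hbV hab
    by_cases hb1 : b = c1
    · -- then b ≠ c2, use the c2-closure
      have hb2 : b ≠ c2 := fun hx => hne (by rw [← hb1, hx])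
      have : b ∈ rcomp E (V.erase c2) r :=
        rcomp_closed a (heq ▸ ha) b (Finset.mem_erase.mpr ⟨hb2, hbV⟩) hab
      exact heq ▸ this
    · exact rcomp_closed a ha b (Finset.mem_erase.mpr ⟨hb1, hbV⟩) hab
  have hrC : r ∈ C := h.r_mem_rcomp hc1
  have htC : t ∈ C := by
    have hwalk := h.connV.2 r h.hrV t h.htV
    exact reachE_closed hcl hrC hwalk
  exact h.cut_disj hc1 t htC (h.t_mem_tcomp hc1)

/-- equal t-sides for distinct cuts is impossible -/
lemma tcomp_ne (h : LCtx V r t E) {c1 c2 : α} (hc1 : c1 ∈ cuts E V) (hc2 : c2 ∈ cuts E V)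
    (hne : c1 ≠ c2) : rcomp E (V.erase c1) t ≠ rcomp E (V.erase c2) t := by
  intro heq
  set D := rcomp E (V.erase c1) t with hD
  have hcl : ∀ a ∈ D, ∀ b ∈ V, adjE E a b → b ∈ D := by
    intro a ha b hbV hab
    by_cases hb1 : b = c1
    · have hb2 : b ≠ c2 := fun hx => hne (by rw [← hb1, hx])
      have : b ∈ rcomp E (V.erase c2) t :=
        rcomp_closed a (heq ▸ ha) b (Finset.mem_erase.mpr ⟨hb2, hbV⟩) hab
      exact heq ▸ this
    · exact rcomp_closed a ha b (Finset.mem_erase.mpr ⟨hb1, hbV⟩) hab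
  have htD : t ∈ D := h.t_mem_tcomp hc1
  have hrD : r ∈ D := by
    have hwalk := h.connV.2 t h.htV r h.hrV
    exact reachE_closed hcl htD hwalk
  exact h.cut_disj hc1 r (h.r_mem_rcomp hc1) hrD

/-- strict nesting of r-components of distinct cut vertices -/
lemma nesting (h : LCtx V r t E) {c1 c2 : α} (hc1 : c1 ∈ cuts E V) (hc2 : c2 ∈ cuts E V)
    (hne : c1 ≠ c2) :
    rcomp E (V.erase c1) r ⊂ rcomp E (V.erase c2) r ∨
    rcomp E (V.erase c2) r ⊂ rcomp E (V.erase c1) r := by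
  by_cases h2 : c2 ∈ rcomp E (V.erase c1) r
  · by_cases h1 : c1 ∈ rcomp E (V.erase c2) r
    · -- both: contradiction via t-sides
      exfalso
      have hd1 : c2 ∉ rcomp E (V.erase c1) t := fun hx => h.cut_disj hc1 c2 h2 hx
      have hd2 : c1 ∉ rcomp E (V.erase c2) t := fun hx => h.cut_disj hc2 c1 h1 hx
      have hsub1 := h.tcomp_sub hc1 hc2 hd1
      have hsub2 := h.tcomp_sub hc2 hc1 hd2
      exact h.tcomp_ne hc1 hc2 hne (le_antisymm hsub1 hsub2)
    · -- c1 ∉ C2: C2 ⊆ C1, strict since c2 ∈ C1 \ C2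
      right
      refine Finset.ssubset_iff_of_subset (h.rcomp_sub hc2 hc1 h1) |>.mpr ?_
      exact ⟨c2, h2, fun hx => (Finset.mem_erase.mp (rcomp_subset hx)).1 rfl⟩
  · -- c2 ∉ C1: C1 ⊆ C2, strict by rcomp_ne
    left
    have hsub := h.rcomp_sub hc1 hc2 h2
    exact lt_of_le_of_ne hsub (h.rcomp_ne hc1 hc2 hne)

/-- uniqueness of the minimising cut vertex -/
lemma mincut_unique (h : LCtx V r t E) {c1 c2 : α} (hc1 : c1 ∈ cuts E V) (hc2 : c2 ∈ cuts E V)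
    (hm1 : ∀ c' ∈ cuts E V, (rcomp E (V.erase c1) r).card ≤ (rcomp E (V.erase c') r).card)
    (hm2 : ∀ c' ∈ cuts E V, (rcomp E (V.erase c2) r).card ≤ (rcomp E (V.erase c') r).card) :
    c1 = c2 := by
  by_contra hne
  rcases h.nesting hc1 hc2 hne with hs | hs
  · exact absurd (hm2 _ hc1) (not_le.mpr (Finset.card_lt_card hs))
  · exact absurd (hm1 _ hc2) (not_le.mpr (Finset.card_lt_card hs))

lemma mincut_exists (h : LCtx V r t E) :
    ∃ c ∈ cuts E V, ∀ c' ∈ cuts E V, (rcomp E (V.erase c) r).card ≤ (rcomp E (V.erase c') r).card := by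
  obtain ⟨c, hc, hmin⟩ := Finset.exists_min_image (cuts E V)
    (fun c => (rcomp E (V.erase c) r).card) h.cuts_nonempty
  exact ⟨c, hc, hmin⟩

end LCtx

/-- conversion inside an insert-edge graph to its filtered version -/
lemma reachE_insert_filter {E : Finset (Finset α)} {f : Finset α} {s SS : Finset α}
    (hs : s ⊆ SS) {a b : α} :
    reachE (insert f E) s a b ↔ reachE (insert f (E.filter (fun e => e ⊆ SS))) s a b := by
  constructor
  · intro h
    induction h with
    | refl => exact .refl
    | @tail p q hp hstep ih =>
      refine ih.tail ⟨hstep.1, hstep.2.1, hstep.2.2.1, ?_⟩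
      rcases Finset.mem_insert.mp hstep.2.2.2 with he | he
      · exact he ▸ Finset.mem_insert_self _ _
      · refine Finset.mem_insert_of_mem (Finset.mem_filter.mpr ⟨he, ?_⟩)
        intro z hz
        rcases Finset.mem_insert.mp hz with h1 | h1
        · exact hs (h1 ▸ hstep.1)
        · exact hs ((Finset.mem_singleton.mp h1) ▸ hstep.2.1)
  · exact fun h => reachE_mono
      (Finset.insert_subset_insert _ (Finset.filter_subset _ _)) (le_refl s) h

namespace LCtx

variable {V : Finset α} {r t : α} {E : Finset (Finset α)} {c : α}

/-- minimality property of a cut vertex -/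
def IsMinCut (E : Finset (Finset α)) (V : Finset α) (r c : α) : Prop :=
  c ∈ cuts E V ∧
    ∀ c' ∈ cuts E V, (rcomp E (V.erase c) r).card ≤ (rcomp E (V.erase c') r).card

lemma no_cut_in_C (h : LCtx V r t E) (hm : IsMinCut E V r c) :
    ∀ v ∈ rcomp E (V.erase c) r, v ∉ cuts E V := by
  intro v hv hvcut
  have hvc : v ≠ c := fun he => (Finset.mem_erase.mp (rcomp_subset hv)).1 he
  rcases h.nesting hm.1 hvcut (Ne.symm hvc) with hs | hs
  · exact (Finset.mem_erase.mp (rcomp_subset (hs.1 hv))).1 rfl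
  · exact absurd (hm.2 _ hvcut) (not_le.mpr (Finset.card_lt_card hs))

lemma r_mem_C (h : LCtx V r t E) (hm : IsMinCut E V r c) : r ∈ rcomp E (V.erase c) r :=
  h.r_mem_rcomp hm.1

lemma c_ne_r (h : LCtx V r t E) (hm : IsMinCut E V r c) : c ≠ r := h.cut_ne_r hm.1
lemma c_ne_t (h : LCtx V r t E) (hm : IsMinCut E V r c) : c ≠ t := h.cut_ne_t hm.1
lemma c_mem_V (hm : IsMinCut E V r c) : c ∈ V := (mem_cuts.mp hm.1).1
lemma c_not_mem_C (hm : IsMinCut E V r c) : c ∉ rcomp E (V.erase c) r :=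
  fun hx => (Finset.mem_erase.mp (rcomp_subset hx)).1 rfl
lemma c_not_mem_D (hm : IsMinCut E V r c) : c ∉ rcomp E (V.erase c) t :=
  fun hx => (Finset.mem_erase.mp (rcomp_subset hx)).1 rfl

lemma sdiff_eq_D (h : LCtx V r t E) (hm : IsMinCut E V r c) :
    V \ insert c (rcomp E (V.erase c) r) = rcomp E (V.erase c) t := by
  ext x
  simp only [Finset.mem_sdiff, Finset.mem_insert, not_or]
  constructor
  · rintro ⟨hxV, hxc, hxC⟩
    rcases h.cut_cover hm.1 (Finset.mem_erase.mpr ⟨hxc, hxV⟩) with h' | h'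
    · exact absurd h' hxC
    · exact h'
  · intro hx
    have hx' := Finset.mem_erase.mp (rcomp_subset hx)
    exact ⟨hx'.2, hx'.1, fun hC => h.cut_disj hm.1 x hC hx⟩

lemma closure_C (h : LCtx V r t E) (hm : IsMinCut E V r c) :
    ∀ a ∈ rcomp E (V.erase c) r, ∀ b ∈ V, adjE E a b →
      b ∈ rcomp E (V.erase c) r ∨ b = c := by
  intro a ha b hbV hab
  by_cases hbc : b = c
  · exact Or.inr hbc
  · exact Or.inl (rcomp_closed a ha b (Finset.mem_erase.mpr ⟨hbc, hbV⟩) hab)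

lemma closure_D (h : LCtx V r t E) (hm : IsMinCut E V r c) :
    ∀ a ∈ rcomp E (V.erase c) t, ∀ b ∈ V, adjE E a b →
      b ∈ rcomp E (V.erase c) t ∨ b = c := by
  intro a ha b hbV hab
  by_cases hbc : b = c
  · exact Or.inr hbc
  · exact Or.inl (rcomp_closed a ha b (Finset.mem_erase.mpr ⟨hbc, hbV⟩) hab)

lemma c_adj_C (h : LCtx V r t E) (hm : IsMinCut E V r c) :
    ∃ a ∈ rcomp E (V.erase c) r, adjE E a c := by
  have hwalk : reachE E V r c := h.connV.2 r h.hrV c (c_mem_V hm)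
  obtain ⟨a, ha, b, hbV, hbn, hab⟩ := reachE_exit hwalk (h.r_mem_C hm) (c_not_mem_C hm)
  rcases h.closure_C hm a ha b hbV hab with h' | h'
  · exact absurd h' hbn
  · exact ⟨a, ha, h' ▸ hab⟩

lemma c_adj_D (h : LCtx V r t E) (hm : IsMinCut E V r c) :
    ∃ a ∈ rcomp E (V.erase c) t, adjE E a c := by
  have hwalk : reachE E V t c := h.connV.2 t h.htV c (c_mem_V hm)
  obtain ⟨a, ha, b, hbV, hbn, hab⟩ := reachE_exit hwalk (h.t_mem_tcomp hm.1) (c_not_mem_D hm)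
  rcases h.closure_D hm a ha b hbV hab with h' | h'
  · exact absurd h' hbn
  · exact ⟨a, ha, h' ▸ hab⟩

lemma connE_C (h : LCtx V r t E) (hm : IsMinCut E V r c) :
    connE E (rcomp E (V.erase c) r) :=
  connE_rcomp (Finset.mem_erase.mpr ⟨fun he => (c_ne_r h hm) he.symm, h.hrV⟩)

lemma connE_D (h : LCtx V r t E) (hm : IsMinCut E V r c) :
    connE E (rcomp E (V.erase c) t) :=
  connE_rcomp (Finset.mem_erase.mpr ⟨fun he => (c_ne_t h hm) he.symm, h.htV⟩)

lemma connE_S (h : LCtx V r t E) (hm : IsMinCut E V r c) :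
    connE E (insert c (rcomp E (V.erase c) r)) := by
  obtain ⟨a, haC, hac⟩ := h.c_adj_C hm
  have hCc := h.connE_C hm
  have hCS : rcomp E (V.erase c) r ⊆ insert c (rcomp E (V.erase c) r) :=
    Finset.subset_insert _ _
  refine connE_of_hub (Finset.mem_insert_of_mem (h.r_mem_C hm)) ?_
  intro u hu
  rcases Finset.mem_insert.mp hu with h' | h'
  · subst h'
    have h1 : reachE E (insert u (rcomp E (V.erase u) r)) u a :=
      reachE_single (Finset.mem_insert_self _ _) (Finset.mem_insert_of_mem haC)
        (adjE_symm hac)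
    exact h1.trans (reachE_mono (le_refl E) hCS (hCc.2 a haC r (h.r_mem_C hm)))
  · exact reachE_mono (le_refl E) hCS (hCc.2 u h' r (h.r_mem_C hm))

lemma connE_V2 (h : LCtx V r t E) (hm : IsMinCut E V r c) :
    connE E (insert c (rcomp E (V.erase c) t)) := by
  obtain ⟨a, haD, hac⟩ := h.c_adj_D hm
  have hDc := h.connE_D hm
  have hDS : rcomp E (V.erase c) t ⊆ insert c (rcomp E (V.erase c) t) :=
    Finset.subset_insert _ _
  refine connE_of_hub (Finset.mem_insert_of_mem (h.t_mem_tcomp hm.1)) ?_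
  intro u hu
  rcases Finset.mem_insert.mp hu with h' | h'
  · subst h'
    have h1 : reachE E (insert u (rcomp E (V.erase u) t)) u a :=
      reachE_single (Finset.mem_insert_self _ _) (Finset.mem_insert_of_mem haD)
        (adjE_symm hac)
    exact h1.trans (reachE_mono (le_refl E) hDS (hDc.2 a haD t (h.t_mem_tcomp hm.1)))
  · exact reachE_mono (le_refl E) hDS (hDc.2 u h' t (h.t_mem_tcomp hm.1))

lemma conn_erase_of_C (h : LCtx V r t E) (hm : IsMinCut E V r c)
    {v : α} (hv : v ∈ rcomp E (V.erase c) r) : connE E (V.erase v) := by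
  have hvV : v ∈ V := Finset.mem_of_mem_erase (rcomp_subset hv)
  have := h.no_cut_in_C hm v hv
  by_contra hcon
  exact this (mem_cuts.mpr ⟨hvV, hcon⟩)

lemma S_subset_V (h : LCtx V r t E) (hm : IsMinCut E V r c) :
    insert c (rcomp E (V.erase c) r) ⊆ V := by
  intro x hx
  rcases Finset.mem_insert.mp hx with h' | h'
  · exact h' ▸ c_mem_V hm
  · exact Finset.mem_of_mem_erase (rcomp_subset h')

lemma V2_subset_V (h : LCtx V r t E) (hm : IsMinCut E V r c) :
    insert c (rcomp E (V.erase c) t) ⊆ V := by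
  intro x hx
  rcases Finset.mem_insert.mp hx with h' | h'
  · exact h' ▸ c_mem_V hm
  · exact Finset.mem_of_mem_erase (rcomp_subset h')

lemma erase_insert_eq {s : Finset α} {c v : α} (hvc : v ≠ c) (hvs : v ∈ s) :
    (insert c s).erase v = insert c (s.erase v) := by
  ext x
  simp only [Finset.mem_erase, Finset.mem_insert]
  constructor
  · rintro ⟨hxv, (hxc | hxs)⟩
    · exact Or.inl hxc
    · exact Or.inr ⟨hxv, hxs⟩
  · rintro (hxc | ⟨hxv, hxs⟩)
    · exact ⟨hxc ▸ fun hh => hvc hh.symm, Or.inl hxc⟩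
    · exact ⟨hxv, Or.inr hxs⟩

/-- the S-side graph is 2-connected -/
lemma tcE_B (h : LCtx V r t E) (hm : IsMinCut E V r c) :
    tcE (E.filter (fun e => e ⊆ insert c (rcomp E (V.erase c) r)))
      (insert c (rcomp E (V.erase c) r)) := by
  have hcC : c ∉ rcomp E (V.erase c) r := c_not_mem_C hm
  refine ⟨?_, ?_, ?_⟩
  · rw [Finset.card_insert_of_notMem hcC]
    have : 0 < (rcomp E (V.erase c) r).card := Finset.card_pos.mpr ⟨r, h.r_mem_C hm⟩
    omega
  · exact (connE_filter_iff (le_refl _)).mp (h.connE_S hm)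
  · intro v hv
    rw [← connE_filter_iff (Finset.erase_subset _ _)]
    rcases Finset.mem_insert.mp hv with hvc | hvC
    · subst hvc
      rw [Finset.erase_insert hcC]
      exact h.connE_C hm
    · have hvc : v ≠ c := fun he => hcC (he ▸ hvC)
      have hcv : c ≠ v := fun he => hvc he.symm
      rw [erase_insert_eq hvc hvC]
      have hvV : v ∈ V := Finset.mem_of_mem_erase (rcomp_subset hvC)
      have hconnVv : connE E (V.erase v) := h.conn_erase_of_C hm hvC
      have hA : (rcomp E (V.erase c) r).erase v ⊆ V.erase v := by
        intro y hy
        obtain ⟨hyv, hyC⟩ := Finset.mem_erase.mp hy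
        exact Finset.mem_erase.mpr ⟨hyv, Finset.mem_of_mem_erase (rcomp_subset hyC)⟩
      have hcs : c ∈ V.erase v := Finset.mem_erase.mpr ⟨hcv, c_mem_V hm⟩
      have hcl : ∀ a ∈ (rcomp E (V.erase c) r).erase v, ∀ b ∈ V.erase v, adjE E a b →
          b ∈ (rcomp E (V.erase c) r).erase v ∨ b = c := by
        intro a ha b hb hab
        rcases h.closure_C hm a (Finset.mem_of_mem_erase ha) b
          (Finset.mem_of_mem_erase hb) hab with h' | h'
        · exact Or.inl (Finset.mem_erase.mpr ⟨(Finset.mem_erase.mp hb).1, h'⟩)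
        · exact Or.inr h'
      have hsub : insert c ((rcomp E (V.erase c) r).erase v) ⊆ V.erase v := by
        intro y hy
        rcases Finset.mem_insert.mp hy with h' | h'
        · exact h' ▸ hcs
        · exact hA h'
      refine ⟨⟨c, Finset.mem_insert_self _ _⟩, fun x hx y hy => ?_⟩
      have hxy := hconnVv.2 x (hsub hx) y (hsub hy)
      exact (reachE_confine hA hcs hcl hx hxy).1 hy

/-- the V₂-side graph: D-side connectivity -/
lemma connE_C2 (h : LCtx V r t E) (hm : IsMinCut E V r c) :
    connE (E.filter (fun e => e ⊆ insert c (rcomp E (V.erase c) t)))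
      (insert c (rcomp E (V.erase c) t)) :=
  (connE_filter_iff (le_refl _)).mp (h.connE_V2 hm)

/-- the V₂-side graph with the extra ct edge is 2-connected -/
lemma tcE_C2 (h : LCtx V r t E) (hm : IsMinCut E V r c) :
    tcE (insert ({c, t} : Finset α) (E.filter (fun e => e ⊆ insert c (rcomp E (V.erase c) t))))
      (insert c (rcomp E (V.erase c) t)) := by
  have hcD : c ∉ rcomp E (V.erase c) t := c_not_mem_D hm
  have htD : t ∈ rcomp E (V.erase c) t := h.t_mem_tcomp hm.1
  have hct : c ≠ t := c_ne_t h hm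
  refine ⟨?_, ?_, ?_⟩
  · rw [Finset.card_insert_of_notMem hcD]
    have : 0 < (rcomp E (V.erase c) t).card := Finset.card_pos.mpr ⟨t, htD⟩
    omega
  · exact connE_mono_E (Finset.subset_insert _ _) (h.connE_C2 hm)
  · intro v hv
    rcases Finset.mem_insert.mp hv with hvc | hvD
    · subst hvc
      rw [Finset.erase_insert hcD]
      refine connE_mono_E (Finset.subset_insert _ _) ?_
      rw [← connE_filter_iff (Finset.subset_insert _ _)]
      exact h.connE_D hm
    · have hvc : v ≠ c := fun he => hcD (he ▸ hvD)
      have hvV : v ∈ V := Finset.mem_of_mem_erase (rcomp_subset hvD)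
      rw [erase_insert_eq hvc hvD]
      have hA : (rcomp E (V.erase c) t).erase v ⊆ V.erase v := by
        intro y hy
        obtain ⟨hyv, hyD⟩ := Finset.mem_erase.mp hy
        exact Finset.mem_erase.mpr ⟨hyv, Finset.mem_of_mem_erase (rcomp_subset hyD)⟩
      have hcs : c ∈ V.erase v := Finset.mem_erase.mpr ⟨fun he => hvc he.symm, c_mem_V hm⟩
      have hcl : ∀ a ∈ (rcomp E (V.erase c) t).erase v, ∀ b ∈ V.erase v, adjE E a b →
          b ∈ (rcomp E (V.erase c) t).erase v ∨ b = c := by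
        intro a ha b hb hab
        rcases h.closure_D hm a (Finset.mem_of_mem_erase ha) b
          (Finset.mem_of_mem_erase hb) hab with h' | h'
        · exact Or.inl (Finset.mem_erase.mpr ⟨(Finset.mem_erase.mp hb).1, h'⟩)
        · exact Or.inr h'
      have hsub : insert c ((rcomp E (V.erase c) t).erase v) ⊆ V.erase v := by
        intro y hy
        rcases Finset.mem_insert.mp hy with h' | h'
        · exact h' ▸ hcs
        · exact hA h'
      have hsubV2 : insert c ((rcomp E (V.erase c) t).erase v) ⊆
          insert c (rcomp E (V.erase c) t) := by
        intro y hy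
        rcases Finset.mem_insert.mp hy with h' | h'
        · exact h' ▸ Finset.mem_insert_self _ _
        · exact Finset.mem_insert_of_mem (Finset.mem_of_mem_erase h')
      by_cases hvt : v = t
      · -- v = t : no ct edge available, use plain confinement in E
        subst hvt
        refine ⟨⟨c, Finset.mem_insert_self _ _⟩, fun x hx y hy => ?_⟩
        have hwalk := (h.connt).2 x (hsub hx) y (hsub hy)
        have hres := (reachE_confine hA hcs hcl hx hwalk).1 hy
        exact reachE_mono (Finset.subset_insert _ _) (le_refl _)
          ((reachE_filter_iff hsubV2).mp hres)
      · -- v ≠ t : use the rt-to-ct confinement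
        have hrA : r ∉ (rcomp E (V.erase c) t).erase v := by
          intro hr
          exact h.cut_disj hm.1 r (h.r_mem_C hm) (Finset.mem_of_mem_erase hr)
        have htA : t ∈ (rcomp E (V.erase c) t).erase v :=
          Finset.mem_erase.mpr ⟨fun he => hvt he.symm, htD⟩
        have hrc : r ≠ c := fun he => (c_ne_r h hm) he.symm
        refine ⟨⟨c, Finset.mem_insert_self _ _⟩, fun x hx y hy => ?_⟩
        have hwalk := (h.htc2.2.2 v hvV).2 x (hsub hx) y (hsub hy)
        have hres := (reachE_confine2 hA hcs htA hrA hrc hct hcl hx hwalk).1 hy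
        exact (reachE_insert_filter hsubV2).mp hres

/-- every edge lies on one side -/
lemma edge_split (h : LCtx V r t E) (hm : IsMinCut E V r c) :
    ∀ e ∈ E, e ⊆ insert c (rcomp E (V.erase c) r) ∨
      e ⊆ insert c (rcomp E (V.erase c) t) := by
  intro e he
  obtain ⟨x, y, hxy, rfl⟩ := Finset.card_eq_two.mp (h.hE e he).1
  have hxV : x ∈ V := (h.hE _ he).2 (by simp)
  have hyV : y ∈ V := (h.hE _ he).2 (by simp)
  have hadj : adjE E x y := ⟨hxy, he⟩
  have hpair : ∀ {a b : α}, a ∈ insert c (rcomp E (V.erase c) r) →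
      b ∈ insert c (rcomp E (V.erase c) r) →
      ({a, b} : Finset α) ⊆ insert c (rcomp E (V.erase c) r) := by
    intro a b ha hb z hz
    rcases Finset.mem_insert.mp hz with h1 | h1
    · exact h1 ▸ ha
    · exact (Finset.mem_singleton.mp h1) ▸ hb
  have hpair2 : ∀ {a b : α}, a ∈ insert c (rcomp E (V.erase c) t) →
      b ∈ insert c (rcomp E (V.erase c) t) →
      ({a, b} : Finset α) ⊆ insert c (rcomp E (V.erase c) t) := by
    intro a b ha hb z hz
    rcases Finset.mem_insert.mp hz with h1 | h1
    · exact h1 ▸ ha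
    · exact (Finset.mem_singleton.mp h1) ▸ hb
  by_cases hxC : x ∈ rcomp E (V.erase c) r
  · rcases h.closure_C hm x hxC y hyV hadj with h' | h'
    · exact Or.inl (hpair (Finset.mem_insert_of_mem hxC) (Finset.mem_insert_of_mem h'))
    · exact Or.inl (hpair (Finset.mem_insert_of_mem hxC) (h' ▸ Finset.mem_insert_self _ _))
  · by_cases hyC : y ∈ rcomp E (V.erase c) r
    · rcases h.closure_C hm y hyC x hxV (adjE_symm hadj) with h' | h'
      · exact Or.inl (hpair (Finset.mem_insert_of_mem h') (Finset.mem_insert_of_mem hyC))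
      · exact Or.inl (hpair (h' ▸ Finset.mem_insert_self _ _) (Finset.mem_insert_of_mem hyC))
    · -- neither endpoint in C : both are in insert c D
      have hmem : ∀ {z : α}, z ∈ V → z ∉ rcomp E (V.erase c) r →
          z ∈ insert c (rcomp E (V.erase c) t) := by
        intro z hzV hzC
        by_cases hzc : z = c
        · exact hzc ▸ Finset.mem_insert_self _ _
        · rcases h.cut_cover hm.1 (Finset.mem_erase.mpr ⟨hzc, hzV⟩) with h' | h'
          · exact absurd h' hzC
          · exact Finset.mem_insert_of_mem h'
      exact Or.inr (hpair2 (hmem hxV hxC) (hmem hyV hyC))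

end LCtx

/-- context for gluing a block B on S with a chain part C2 on V₂ = insert c (V \ S) -/
structure GCtx (V : Finset α) (r t c : α) (S : Finset α) (B C2 : Finset (Finset α)) : Prop where
  hrV : r ∈ V
  htV : t ∈ V
  hrt : r ≠ t
  hcard : 3 ≤ V.card
  hSV : S ⊆ V
  hrS : r ∈ S
  hcS : c ∈ S
  hcr : c ≠ r
  htS : t ∉ S
  hB : ∀ e ∈ B, e.card = 2 ∧ e ⊆ S
  hC2 : ∀ e ∈ C2, e.card = 2 ∧ e ⊆ insert c (V \ S)
  htcB : tcE B S
  hconnC2 : connE C2 (insert c (V \ S))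
  htcC2 : tcE (insert ({c, t} : Finset α) C2) (insert c (V \ S))

namespace GCtx

variable {V S : Finset α} {r t c : α} {B C2 : Finset (Finset α)}

lemma hct (h : GCtx V r t c S B C2) : c ≠ t := fun he => h.htS (he ▸ h.hcS)
lemma hcV (h : GCtx V r t c S B C2) : c ∈ V := h.hSV h.hcS
lemma ht2 (h : GCtx V r t c S B C2) : t ∈ insert c (V \ S) :=
  Finset.mem_insert_of_mem (Finset.mem_sdiff.mpr ⟨h.htV, h.htS⟩)
lemma hcnVS (h : GCtx V r t c S B C2) : c ∉ V \ S := fun hx => (Finset.mem_sdiff.mp hx).2 h.hcS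
lemma hr2 (h : GCtx V r t c S B C2) : r ∉ insert c (V \ S) := by
  intro hx
  rcases Finset.mem_insert.mp hx with h1 | h1
  · exact h.hcr h1.symm
  · exact (Finset.mem_sdiff.mp h1).2 h.hrS
lemma hV2V (h : GCtx V r t c S B C2) : insert c (V \ S) ⊆ V := by
  intro x hx
  rcases Finset.mem_insert.mp hx with h1 | h1
  · exact h1 ▸ h.hcV
  · exact (Finset.mem_sdiff.mp h1).1

lemma inter_eq (h : GCtx V r t c S B C2) {x : α} (hxS : x ∈ S)
    (hx2 : x ∈ insert c (V \ S)) : x = c := by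
  rcases Finset.mem_insert.mp hx2 with h1 | h1
  · exact h1
  · exact absurd hxS (Finset.mem_sdiff.mp h1).2

lemma hE (h : GCtx V r t c S B C2) : ∀ e ∈ B ∪ C2, e.card = 2 ∧ e ⊆ V := by
  intro e he
  rcases Finset.mem_union.mp he with h1 | h1
  · exact ⟨(h.hB e h1).1, (h.hB e h1).2.trans h.hSV⟩
  · exact ⟨(h.hC2 e h1).1, (h.hC2 e h1).2.trans h.hV2V⟩

lemma disjBC (h : GCtx V r t c S B C2) : ∀ e, e ∈ B → e ∈ C2 → False := by
  intro e heB heC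
  have h1 := (h.hB e heB).2
  have h2 := (h.hC2 e heC).2
  have : e ⊆ {c} := fun x hx => Finset.mem_singleton.mpr (h.inter_eq (h1 hx) (h2 hx))
  have := Finset.card_le_card this
  rw [(h.hB e heB).1, Finset.card_singleton] at this
  omega

lemma rt_not_mem (h : GCtx V r t c S B C2) : ({r, t} : Finset α) ∉ B ∪ C2 := by
  intro he
  rcases Finset.mem_union.mp he with h1 | h1
  · exact h.htS ((h.hB _ h1).2 (by simp))
  · exact h.hr2 ((h.hC2 _ h1).2 (by simp))

/-- adjacency from inside S \ {c} stays in S -/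
lemma adj_S (h : GCtx V r t c S B C2) {a b : α} (ha : a ∈ S) (hac : a ≠ c)
    (hab : adjE (B ∪ C2) a b) : b ∈ S := by
  rcases Finset.mem_union.mp hab.2 with h1 | h1
  · exact (h.hB _ h1).2 (by simp)
  · exact absurd (h.inter_eq ha ((h.hC2 _ h1).2 (by simp))) hac

lemma adj_V2 (h : GCtx V r t c S B C2) {a b : α} (ha : a ∈ insert c (V \ S)) (hac : a ≠ c)
    (hab : adjE (B ∪ C2) a b) : b ∈ insert c (V \ S) := by
  rcases Finset.mem_union.mp hab.2 with h1 | h1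
  · have haS : a ∈ S := (h.hB _ h1).2 (by simp)
    exact absurd (h.inter_eq haS ha) hac
  · exact (h.hC2 _ h1).2 (by simp)

/-- removing c disconnects r from t -/
lemma not_conn_erase_c (h : GCtx V r t c S B C2) : ¬ connE (B ∪ C2) (V.erase c) := by
  intro hconn
  have hrm : r ∈ V.erase c := Finset.mem_erase.mpr ⟨fun he => h.hcr he.symm, h.hrV⟩
  have htm : t ∈ V.erase c := Finset.mem_erase.mpr ⟨fun he => h.hct he.symm, h.htV⟩
  have hwalk := hconn.2 r hrm t htm
  have hcl : ∀ a ∈ S.erase c, ∀ b ∈ V.erase c, adjE (B ∪ C2) a b → b ∈ S.erase c := by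
    intro a ha b hb hab
    exact Finset.mem_erase.mpr ⟨(Finset.mem_erase.mp hb).1,
      h.adj_S (Finset.mem_of_mem_erase ha) (Finset.mem_erase.mp ha).1 hab⟩
  have hrmem : r ∈ S.erase c := Finset.mem_erase.mpr ⟨fun he => h.hcr he.symm, h.hrS⟩
  have := reachE_closed hcl hrmem hwalk
  exact h.htS (Finset.mem_of_mem_erase this)

lemma not_tcE (h : GCtx V r t c S B C2) : ¬ tcE (B ∪ C2) V := by
  intro htc
  exact h.not_conn_erase_c (htc.2.2 c h.hcV)

/-- V is covered by S and V \ S -/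
lemma cover (h : GCtx V r t c S B C2) {x : α} (hx : x ∈ V) : x ∈ S ∨ x ∈ V \ S := by
  by_cases hxS : x ∈ S
  · exact Or.inl hxS
  · exact Or.inr (Finset.mem_sdiff.mpr ⟨hx, hxS⟩)

/-- adding the rt edge makes the glued graph 2-connected -/
lemma tcE_glue (h : GCtx V r t c S B C2) :
    tcE (insert ({r, t} : Finset α) (B ∪ C2)) V := by
  set E := B ∪ C2 with hEdef
  set V2 := insert c (V \ S) with hV2def
  have hBE : B ⊆ insert ({r, t} : Finset α) E := by
    intro e he; exact Finset.mem_insert_of_mem (Finset.mem_union_left _ he)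
  have hCE : C2 ⊆ insert ({r, t} : Finset α) E := by
    intro e he; exact Finset.mem_insert_of_mem (Finset.mem_union_right _ he)
  have hadjrt : adjE (insert ({r, t} : Finset α) E) r t := ⟨h.hrt, Finset.mem_insert_self _ _⟩
  refine ⟨by have := h.hcard; omega, ?_, ?_⟩
  · -- connectivity of the whole
    refine connE_of_hub h.hcV ?_
    intro x hx
    rcases h.cover hx with h1 | h1
    · exact reachE_mono hBE h.hSV (h.htcB.2.1.2 x h1 c h.hcS)
    · exact reachE_mono hCE h.hV2V
        (h.hconnC2.2 x (Finset.mem_insert_of_mem h1) c (Finset.mem_insert_self _ _))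
  · intro v hv
    by_cases hvc : v = c
    · -- remove c : B side hangs on r, C2 side reaches t, join via rt
      subst hvc
      refine connE_of_hub (Finset.mem_erase.mpr ⟨fun he => h.hcr he.symm, h.hrV⟩) ?_
      intro x hx
      have hxV := Finset.mem_of_mem_erase hx
      have hxc := (Finset.mem_erase.mp hx).1
      rcases h.cover hxV with h1 | h1
      · have := (h.htcB.2.2 v h.hcS).2 x (Finset.mem_erase.mpr ⟨hxc, h1⟩) r
          (Finset.mem_erase.mpr ⟨fun he => h.hcr he.symm, h.hrS⟩)
        refine reachE_mono hBE ?_ this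
        intro y hy
        exact Finset.mem_erase.mpr ⟨(Finset.mem_erase.mp hy).1,
          h.hSV (Finset.mem_of_mem_erase hy)⟩
      · -- x ∈ V \ S : reach t in C2 without using c, then jump to r
        have hVSsub : V \ S ⊆ V.erase v := by
          intro y hy
          exact Finset.mem_erase.mpr ⟨fun he => h.hcnVS (he ▸ hy), (Finset.mem_sdiff.mp hy).1⟩
        have hx2 : x ∈ V2.erase v :=
          Finset.mem_erase.mpr ⟨hxc, Finset.mem_insert_of_mem h1⟩
        have ht2' : t ∈ V2.erase v := Finset.mem_erase.mpr ⟨fun he => h.hct he.symm, h.ht2⟩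
        have hreach := (h.htcC2.2.2 v (Finset.mem_insert_self _ _)).2 x hx2 t ht2'
        have hV2e : V2.erase v = V \ S := by
          rw [hV2def, Finset.erase_insert h.hcnVS]
        rw [hV2e] at hreach
        have hreach2 : reachE C2 (V \ S) x t :=
          reachE_insert_unusable' (by rw [hV2e] at *; exact fun hx' => h.hcnVS hx') hreach
        have hreach3 := reachE_mono hCE hVSsub hreach2
        refine hreach3.tail ⟨hVSsub (Finset.mem_sdiff.mpr ⟨h.htV, h.htS⟩), 
          Finset.mem_erase.mpr ⟨fun he => h.hcr he.symm, h.hrV⟩, adjE_symm hadjrt⟩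
    · rcases h.cover hv with hvS | hvVS
      · -- v ∈ S, v ≠ c : hub c
        refine connE_of_hub (Finset.mem_erase.mpr ⟨fun he => hvc he.symm, h.hcV⟩) ?_
        intro x hx
        have hxV := Finset.mem_of_mem_erase hx
        have hxv := (Finset.mem_erase.mp hx).1
        rcases h.cover hxV with h1 | h1
        · have := (h.htcB.2.2 v hvS).2 x (Finset.mem_erase.mpr ⟨hxv, h1⟩) c
            (Finset.mem_erase.mpr ⟨fun he => hvc he.symm, h.hcS⟩)
          refine reachE_mono hBE ?_ this
          intro y hy
          exact Finset.mem_erase.mpr ⟨(Finset.mem_erase.mp hy).1,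
            h.hSV (Finset.mem_of_mem_erase hy)⟩
        · have hV2sub : V2 ⊆ V.erase v := by
            intro y hy
            rcases Finset.mem_insert.mp hy with h2 | h2
            · exact Finset.mem_erase.mpr ⟨h2 ▸ fun he => hvc he.symm, h2 ▸ h.hcV⟩
            · exact Finset.mem_erase.mpr ⟨fun he => (Finset.mem_sdiff.mp h2).2 (he ▸ hvS),
                (Finset.mem_sdiff.mp h2).1⟩
          exact reachE_mono hCE hV2sub
            (h.hconnC2.2 x (Finset.mem_insert_of_mem h1) c (Finset.mem_insert_self _ _))
      · -- v ∈ V \ S : hub c, reroute the ct edge through S and rt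
        have hvnS := (Finset.mem_sdiff.mp hvVS).2
        have hSsub : S ⊆ V.erase v := fun y hy =>
          Finset.mem_erase.mpr ⟨fun he => hvnS (he ▸ hy), h.hSV hy⟩
        refine connE_of_hub (Finset.mem_erase.mpr ⟨fun he => hvc he.symm, h.hcV⟩) ?_
        intro x hx
        have hxV := Finset.mem_of_mem_erase hx
        have hxv := (Finset.mem_erase.mp hx).1
        rcases h.cover hxV with h1 | h1
        · exact reachE_mono hBE hSsub (h.htcB.2.1.2 x h1 c h.hcS)
        · -- x ∈ V \ S, x ≠ v
          have hx2 : x ∈ V2.erase v :=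
            Finset.mem_erase.mpr ⟨hxv, Finset.mem_insert_of_mem h1⟩
          have hc2 : c ∈ V2.erase v :=
            Finset.mem_erase.mpr ⟨fun he => hvc he.symm, Finset.mem_insert_self _ _⟩
          have hreach := (h.htcC2.2.2 v (Finset.mem_insert_of_mem hvVS)).2 x hx2 c hc2
          -- substitute steps
          refine reachE_sub ?_ hreach
          intro a b hstep
          have hsub2 : V2.erase v ⊆ V.erase v := by
            intro y hy
            exact Finset.mem_erase.mpr ⟨(Finset.mem_erase.mp hy).1,
              h.hV2V (Finset.mem_of_mem_erase hy)⟩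
          have haM : a ∈ V.erase v := hsub2 hstep.1
          have hbM : b ∈ V.erase v := hsub2 hstep.2.1
          rcases Finset.mem_insert.mp hstep.2.2.2 with he | he
          · -- the ct edge : a,b ∈ {c,t}
            have hpm : a ∈ ({c, t} : Finset α) := he ▸ (by simp : a ∈ ({a, b} : Finset α))
            have hqm : b ∈ ({c, t} : Finset α) := he ▸ (by simp : b ∈ ({a, b} : Finset α))
            have hvt : v ≠ t := by
              intro hvt
              have : t ∈ V2.erase v → False := fun hmem => (Finset.mem_erase.mp hmem).1 hvt.symm
              -- t must be one of a, b which are in V2.erase v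
              rcases Finset.mem_insert.mp hpm with h2 | h2
              · rcases Finset.mem_insert.mp hqm with h3 | h3
                · exact absurd (h2.trans h3.symm) hstep.2.2.1
                · exact this ((Finset.mem_singleton.mp h3) ▸ hstep.2.1)
              · exact this ((Finset.mem_singleton.mp h2) ▸ hstep.1)
            have hct_reach : reachE (insert ({r, t} : Finset α) E) (V.erase v) c t := by
              have h1' : reachE B S c r := h.htcB.2.1.2 c h.hcS r h.hrS
              have h2' := reachE_mono hBE hSsub h1'
              exact h2'.tail ⟨hSsub h.hrS,
                Finset.mem_erase.mpr ⟨fun he' => hvt he'.symm, h.htV⟩, hadjrt⟩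
            rcases Finset.mem_insert.mp hpm with h2 | h2
            · rcases Finset.mem_insert.mp hqm with h3 | h3
              · exact absurd (h2.trans h3.symm) hstep.2.2.1
              · exact h2 ▸ (Finset.mem_singleton.mp h3) ▸ hct_reach
            · rcases Finset.mem_insert.mp hqm with h3 | h3
              · have h2' := Finset.mem_singleton.mp h2
                subst h2'; subst h3
                exact reachE_symm hct_reach
              · exact absurd ((Finset.mem_singleton.mp h2).trans
                  (Finset.mem_singleton.mp h3).symm) hstep.2.2.1
          · exact reachE_single haM hbM
              ⟨hstep.2.2.1, Finset.mem_insert_of_mem (Finset.mem_union_right _ he)⟩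

end GCtx

namespace GCtx

variable {V S : Finset α} {r t c : α} {B C2 : Finset (Finset α)}

lemma rcomp_eq (h : GCtx V r t c S B C2) :
    rcomp (B ∪ C2) (V.erase c) r = S.erase c := by
  ext x
  constructor
  · intro hx
    obtain ⟨hxm, hreach⟩ := mem_rcomp.mp hx
    have hcl : ∀ a ∈ S.erase c, ∀ b ∈ V.erase c, adjE (B ∪ C2) a b → b ∈ S.erase c := by
      intro a ha b hb hab
      exact Finset.mem_erase.mpr ⟨(Finset.mem_erase.mp hb).1,
        h.adj_S (Finset.mem_of_mem_erase ha) (Finset.mem_erase.mp ha).1 hab⟩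
    exact reachE_closed hcl (Finset.mem_erase.mpr ⟨fun he => h.hcr he.symm, h.hrS⟩) hreach
  · intro hx
    have hrm : r ∈ S.erase c := Finset.mem_erase.mpr ⟨fun he => h.hcr he.symm, h.hrS⟩
    have hreach := (h.htcB.2.2 c h.hcS).2 r hrm x hx
    have hsub : S.erase c ⊆ V.erase c := fun y hy =>
      Finset.mem_erase.mpr ⟨(Finset.mem_erase.mp hy).1, h.hSV (Finset.mem_of_mem_erase hy)⟩
    exact mem_rcomp.mpr ⟨hsub hx,
      reachE_mono Finset.subset_union_left hsub hreach⟩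

lemma conn_erase_S (h : GCtx V r t c S B C2) {v : α} (hvS : v ∈ S) (hvc : v ≠ c) :
    connE (B ∪ C2) (V.erase v) := by
  refine connE_of_hub (Finset.mem_erase.mpr ⟨fun he => hvc he.symm, h.hcV⟩) ?_
  intro x hx
  have hxV := Finset.mem_of_mem_erase hx
  have hxv := (Finset.mem_erase.mp hx).1
  rcases h.cover hxV with h1 | h1
  · have := (h.htcB.2.2 v hvS).2 x (Finset.mem_erase.mpr ⟨hxv, h1⟩) c
      (Finset.mem_erase.mpr ⟨fun he => hvc he.symm, h.hcS⟩)
    refine reachE_mono Finset.subset_union_left ?_ this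
    intro y hy
    exact Finset.mem_erase.mpr ⟨(Finset.mem_erase.mp hy).1, h.hSV (Finset.mem_of_mem_erase hy)⟩
  · have hV2sub : insert c (V \ S) ⊆ V.erase v := by
      intro y hy
      rcases Finset.mem_insert.mp hy with h2 | h2
      · exact Finset.mem_erase.mpr ⟨h2 ▸ fun he => hvc he.symm, h2 ▸ h.hcV⟩
      · exact Finset.mem_erase.mpr ⟨fun he => (Finset.mem_sdiff.mp h2).2 (he ▸ hvS),
          (Finset.mem_sdiff.mp h2).1⟩
    exact reachE_mono Finset.subset_union_right hV2sub
      (h.hconnC2.2 x (Finset.mem_insert_of_mem h1) c (Finset.mem_insert_self _ _))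

lemma isMinCut (h : GCtx V r t c S B C2) : LCtx.IsMinCut (B ∪ C2) V r c := by
  have hcmem : c ∈ cuts (B ∪ C2) V := mem_cuts.mpr ⟨h.hcV, h.not_conn_erase_c⟩
  refine ⟨hcmem, ?_⟩
  intro c' hc'
  by_cases hcc : c' = c
  · subst hcc; exact le_refl _
  · obtain ⟨hc'V, hc'n⟩ := mem_cuts.mp hc'
    have hc'S : c' ∉ S := fun hc'S => hc'n (h.conn_erase_S hc'S hcc)
    have hSsub : S ⊆ rcomp (B ∪ C2) (V.erase c') r := by
      intro x hxS
      have hxm : x ∈ V.erase c' :=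
        Finset.mem_erase.mpr ⟨fun he => hc'S (he ▸ hxS), h.hSV hxS⟩
      have hreach := h.htcB.2.1.2 r h.hrS x hxS
      have hsub : S ⊆ V.erase c' := fun y hy =>
        Finset.mem_erase.mpr ⟨fun he => hc'S (he ▸ hy), h.hSV hy⟩
      exact mem_rcomp.mpr ⟨hxm, reachE_mono Finset.subset_union_left hsub hreach⟩
    rw [h.rcomp_eq]
    have h1 : (S.erase c).card < S.card := Finset.card_erase_lt_of_mem h.hcS
    have h2 : S.card ≤ (rcomp (B ∪ C2) (V.erase c') r).card := Finset.card_le_card hSsub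
    omega

lemma lctx (h : GCtx V r t c S B C2) : LCtx V r t (B ∪ C2) :=
  ⟨h.hrV, h.htV, h.hrt, h.hcard, h.hE, h.rt_not_mem, h.not_tcE, h.tcE_glue⟩

lemma filter_S (h : GCtx V r t c S B C2) :
    (B ∪ C2).filter (fun e => e ⊆ S) = B := by
  ext e
  simp only [Finset.mem_filter, Finset.mem_union]
  constructor
  · rintro ⟨(h1 | h1), hsub⟩
    · exact h1
    · exfalso
      have h2 := (h.hC2 e h1).2
      have : e ⊆ {c} := fun x hx => Finset.mem_singleton.mpr (h.inter_eq (hsub hx) (h2 hx))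
      have := Finset.card_le_card this
      rw [(h.hC2 e h1).1, Finset.card_singleton] at this
      omega
  · intro he
    exact ⟨Or.inl he, (h.hB e he).2⟩

lemma filter_V2 (h : GCtx V r t c S B C2) :
    (B ∪ C2).filter (fun e => e ⊆ insert c (V \ S)) = C2 := by
  ext e
  simp only [Finset.mem_filter, Finset.mem_union]
  constructor
  · rintro ⟨(h1 | h1), hsub⟩
    · exfalso
      have h2 := (h.hB e h1).2
      have : e ⊆ {c} := fun x hx => Finset.mem_singleton.mpr (h.inter_eq (h2 hx) (hsub hx))
      have := Finset.card_le_card this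
      rw [(h.hB e h1).1, Finset.card_singleton] at this
      omega
    · exact h1
  · intro he
    exact ⟨Or.inr he, (h.hC2 e he).2⟩

lemma card_eq (h : GCtx V r t c S B C2) : (B ∪ C2).card = B.card + C2.card := by
  rw [Finset.card_union_of_disjoint]
  exact Finset.disjoint_left.mpr (fun e heB heC => h.disjBC e heB heC)

end GCtx

section Sums

variable {β : Type} [DecidableEq β]

lemma sum_powerset_split (Eall : Finset β) (a : β) (ha : a ∈ Eall)
    (P : Finset β → Prop) [DecidablePred P] :
    ∑ E ∈ Eall.powerset.filter P, (-1 : ℤ) ^ E.card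
      = (∑ E ∈ (Eall.erase a).powerset.filter (fun E => P E ∧ ¬ P (insert a E)),
          (-1 : ℤ) ^ E.card)
        - ∑ E ∈ (Eall.erase a).powerset.filter (fun E => ¬ P E ∧ P (insert a E)),
            (-1 : ℤ) ^ E.card := by
  classical
  have h0 : Eall = insert a (Eall.erase a) := (Finset.insert_erase ha).symm
  have hanot : a ∉ Eall.erase a := Finset.notMem_erase _ _
  conv_lhs => rw [h0]
  rw [Finset.powerset_insert, Finset.filter_union]
  have hdisj : Disjoint ((Eall.erase a).powerset.filter P)
      (((Eall.erase a).powerset.image (insert a)).filter P) := by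
    refine Finset.disjoint_left.mpr ?_
    intro E hE1 hE2
    have h1 := Finset.mem_powerset.mp (Finset.mem_filter.mp hE1).1
    obtain ⟨F, hF, rfl⟩ := Finset.mem_image.mp (Finset.mem_filter.mp hE2).1
    exact hanot (h1 (Finset.mem_insert_self a F))
  rw [Finset.sum_union hdisj]
  have himg : ((Eall.erase a).powerset.image (insert a)).filter P
      = ((Eall.erase a).powerset.filter (fun E => P (insert a E))).image (insert a) := by
    rw [Finset.filter_image]
  rw [himg]
  have hinj : ∀ x ∈ (Eall.erase a).powerset.filter (fun E => P (insert a E)),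
      ∀ y ∈ (Eall.erase a).powerset.filter (fun E => P (insert a E)),
      insert a x = insert a y → x = y := by
    intro x hx y hy hxy
    have hax : a ∉ x := fun hh => hanot (Finset.mem_powerset.mp (Finset.mem_filter.mp hx).1 hh)
    have hay : a ∉ y := fun hh => hanot (Finset.mem_powerset.mp (Finset.mem_filter.mp hy).1 hh)
    rw [← Finset.erase_insert hax, ← Finset.erase_insert hay, hxy]
  rw [Finset.sum_image hinj]
  have hcard : ∀ E ∈ (Eall.erase a).powerset.filter (fun E => P (insert a E)),
      (-1 : ℤ) ^ (insert a E).card = -(-1 : ℤ) ^ E.card := by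
    intro E hE
    have hax : a ∉ E := fun hh => hanot (Finset.mem_powerset.mp (Finset.mem_filter.mp hE).1 hh)
    rw [Finset.card_insert_of_notMem hax, pow_succ]
    ring
  rw [Finset.sum_congr rfl hcard]
  have key : ∀ (Q R : Finset β → Prop), ∀ [DecidablePred Q] [DecidablePred R],
      (∑ E ∈ (Eall.erase a).powerset.filter Q, (-1 : ℤ) ^ E.card)
        + ∑ E ∈ (Eall.erase a).powerset.filter R, -(-1 : ℤ) ^ E.card
      = (∑ E ∈ (Eall.erase a).powerset.filter (fun E => Q E ∧ ¬ R E), (-1 : ℤ) ^ E.card)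
        - ∑ E ∈ (Eall.erase a).powerset.filter (fun E => ¬ Q E ∧ R E), (-1 : ℤ) ^ E.card := by
    intro Q R _ _
    rw [Finset.sum_filter, Finset.sum_filter, Finset.sum_filter, Finset.sum_filter,
      ← Finset.sum_add_distrib, ← Finset.sum_sub_distrib]
    refine Finset.sum_congr rfl ?_
    intro E _
    by_cases hq : Q E <;> by_cases hr : R E <;> simp [hq, hr]
  exact key P (fun E => P (insert a E))

lemma sum_powerset_toggle_zero (Eall : Finset β) (a : β) (ha : a ∈ Eall)
    (P : Finset β → Prop) [DecidablePred P]
    (h : ∀ E ∈ (Eall.erase a).powerset, (P E ↔ P (insert a E))) :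
    ∑ E ∈ Eall.powerset.filter P, (-1 : ℤ) ^ E.card = 0 := by
  rw [sum_powerset_split Eall a ha P]
  have h1 : (Eall.erase a).powerset.filter (fun E => P E ∧ ¬ P (insert a E)) = ∅ := by
    refine Finset.filter_eq_empty_iff.mpr ?_
    intro E hE hPE
    exact hPE.2 ((h E hE).mp hPE.1)
  have h2 : (Eall.erase a).powerset.filter (fun E => ¬ P E ∧ P (insert a E)) = ∅ := by
    refine Finset.filter_eq_empty_iff.mpr ?_
    intro E hE hPE
    exact hPE.1 ((h E hE).mpr hPE.2)
  rw [h1, h2]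
  simp

end Sums

/-- 2-subsets of a vertex set -/
def edgesOf (s : Finset α) : Finset (Finset α) := Finset.powersetCard 2 s

lemma mem_edgesOf {s : Finset α} {e : Finset α} :
    e ∈ edgesOf s ↔ e ⊆ s ∧ e.card = 2 := Finset.mem_powersetCard

lemma pair_mem_edgesOf {s : Finset α} {x y : α} (hx : x ∈ s) (hy : y ∈ s) (hxy : x ≠ y) :
    ({x, y} : Finset α) ∈ edgesOf s := by
  refine mem_edgesOf.mpr ⟨?_, Finset.card_pair hxy⟩
  intro z hz
  rcases Finset.mem_insert.mp hz with h1 | h1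
  · exact h1 ▸ hx
  · exact (Finset.mem_singleton.mp h1) ▸ hy

/-- star condition: all edges at r go into K -/
def starP (r : α) (K : Finset α) (E : Finset (Finset α)) : Prop :=
  ∀ e ∈ E, r ∈ e → e ⊆ insert r K

lemma starP_mono {r : α} {K : Finset α} {E E' : Finset (Finset α)} (hEE : E ⊆ E')
    (h : starP r K E') : starP r K E := fun e he => h e (hEE he)

lemma tcE_mono_E {E E' : Finset (Finset α)} {s : Finset α} (hEE : E ⊆ E')
    (h : tcE E s) : tcE E' s :=
  ⟨h.1, connE_mono_E hEE h.2.1, fun v hv => connE_mono_E hEE (h.2.2 v hv)⟩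

lemma not_connE_of_star_empty {r : α} {E : Finset (Finset α)} {s : Finset α}
    (hstar : starP r ∅ E) (hcard : 2 ≤ s.card) (hrs : r ∈ s) : ¬ connE E s := by
  intro hconn
  obtain ⟨x, hxs, hxr⟩ : ∃ x ∈ s, x ≠ r := by
    have hc1 : 1 < s.card := by omega
    obtain ⟨a, ha, b, hb, hab⟩ := Finset.one_lt_card.mp hc1
    by_cases har : a = r
    · exact ⟨b, hb, fun hbr => hab (har ▸ hbr ▸ rfl)⟩
    · exact ⟨a, ha, har⟩
  have hreach := hconn.2 r hrs x hxs
  obtain ⟨z, hz⟩ := reachE_first_step hreach (fun he => hxr he.symm)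
  have h1 := hstar _ hz.2.2.2 (by simp)
  have h2 : z ∈ insert r (∅ : Finset α) := h1 (by simp)
  rcases Finset.mem_insert.mp h2 with h3 | h3
  · exact hz.2.2.1 h3.symm
  · exact absurd h3 (Finset.notMem_empty z)

/-- removing a single edge from a 2-connected graph on ≥ 3 vertices keeps it connected -/
lemma connE_erase_edge {X : Finset (Finset α)} {s : Finset α} {c t : α}
    (htc : tcE X s) (h3 : 3 ≤ s.card) (hc : c ∈ s) (ht : t ∈ s) (hct : c ≠ t) :
    connE (X.erase ({c, t} : Finset α)) s := by
  obtain ⟨w, hws, hwc, hwt⟩ : ∃ w ∈ s, w ≠ c ∧ w ≠ t := by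
    have h2 : ({c, t} : Finset α).card ≤ 2 := Finset.card_insert_le _ _ |>.trans (by simp)
    have : ¬ (s ⊆ {c, t}) := by
      intro hsub
      have h4 := le_trans (Finset.card_le_card hsub) h2
      omega
    obtain ⟨w, hw, hwn⟩ := Finset.not_subset.mp this
    simp only [Finset.mem_insert, Finset.mem_singleton, not_or] at hwn
    exact ⟨w, hw, hwn.1, hwn.2⟩
  refine connE_of_hub hws ?_
  intro u hus
  by_cases hu : u = c
  · subst hu
    have hwalk := (htc.2.2 t ht).2 u (Finset.mem_erase.mpr ⟨hct, hc⟩) w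
      (Finset.mem_erase.mpr ⟨hwt, hws⟩)
    refine reachE_sub ?_ hwalk
    intro a b hstep
    have hta : t ∉ ({a, b} : Finset α) := by
      intro hmem
      rcases Finset.mem_insert.mp hmem with h1 | h1
      · exact (Finset.mem_erase.mp (h1 ▸ hstep.1)).1 rfl
      · exact (Finset.mem_erase.mp ((Finset.mem_singleton.mp h1) ▸ hstep.2.1)).1 rfl
    refine reachE_single (Finset.mem_of_mem_erase hstep.1) (Finset.mem_of_mem_erase hstep.2.1)
      ⟨hstep.2.2.1, Finset.mem_erase.mpr ⟨?_, hstep.2.2.2⟩⟩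
    intro he
    apply hta
    rw [he]
    simp
  · have hwalk := (htc.2.2 c hc).2 u (Finset.mem_erase.mpr ⟨hu, hus⟩) w
      (Finset.mem_erase.mpr ⟨hwc, hws⟩)
    refine reachE_sub ?_ hwalk
    intro a b hstep
    have hca : c ∉ ({a, b} : Finset α) := by
      intro hmem
      rcases Finset.mem_insert.mp hmem with h1 | h1
      · exact (Finset.mem_erase.mp (h1 ▸ hstep.1)).1 rfl
      · exact (Finset.mem_erase.mp ((Finset.mem_singleton.mp h1) ▸ hstep.2.1)).1 rfl
    refine reachE_single (Finset.mem_of_mem_erase hstep.1) (Finset.mem_of_mem_erase hstep.2.1)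
      ⟨hstep.2.2.1, Finset.mem_erase.mpr ⟨?_, hstep.2.2.2⟩⟩
    intro he
    apply hca
    rw [he]
    simp

open scoped Classical in
/-- canonical minimal cut vertex -/
noncomputable def cOf (V : Finset α) (r : α) (E : Finset (Finset α)) : α :=
  if h : ∃ c, LCtx.IsMinCut E V r c then h.choose else r

open scoped Classical in
noncomputable def datOf (V : Finset α) (r : α) (E : Finset (Finset α)) : Finset α × α :=
  (insert (cOf V r E) (rcomp E (V.erase (cOf V r E)) r), cOf V r E)

lemma cOf_isMinCut {V : Finset α} {r t : α} {E : Finset (Finset α)} (h : LCtx V r t E) :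
    LCtx.IsMinCut E V r (cOf V r E) := by
  obtain ⟨c, hc, hmin⟩ := h.mincut_exists
  have hex : ∃ c, LCtx.IsMinCut E V r c := ⟨c, hc, hmin⟩
  rw [cOf, dif_pos hex]
  exact hex.choose_spec

lemma cOf_eq {V : Finset α} {r t c : α} {E : Finset (Finset α)} (h : LCtx V r t E)
    (hm : LCtx.IsMinCut E V r c) : cOf V r E = c := by
  have h1 := cOf_isMinCut h
  exact h.mincut_unique h1.1 hm.1 h1.2 hm.2

open scoped Classical in
/-- the total star-restricted sum vanishes -/
lemma sum_star_zero {S : Finset α} {r : α} (K' : Finset α) (h3 : 3 ≤ S.card) (hrS : r ∈ S) :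
    ∑ E ∈ (edgesOf S).powerset.filter (fun E => starP r K' E), (-1 : ℤ) ^ E.card = 0 := by
  obtain ⟨x, hx, y, hy, hxy⟩ : ∃ x ∈ S.erase r, ∃ y ∈ S.erase r, x ≠ y := by
    have h1 : 1 < (S.erase r).card := by
      rw [Finset.card_erase_of_mem hrS]; omega
    exact Finset.one_lt_card.mp h1
  have hxS := Finset.mem_of_mem_erase hx
  have hyS := Finset.mem_of_mem_erase hy
  have hxr := (Finset.mem_erase.mp hx).1
  have hyr := (Finset.mem_erase.mp hy).1
  refine sum_powerset_toggle_zero (edgesOf S) ({x, y} : Finset α)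
    (pair_mem_edgesOf hxS hyS hxy) _ ?_
  intro E hE
  constructor
  · intro hstar e he hre
    rcases Finset.mem_insert.mp he with h1 | h1
    · exfalso
      subst h1
      rcases Finset.mem_insert.mp hre with h2 | h2
      · exact hxr h2.symm
      · exact hyr (Finset.mem_singleton.mp h2).symm
    · exact hstar e h1 hre
  · exact fun h => starP_mono (Finset.subset_insert _ _) h

open scoped Classical in
theorem main_sum : ∀ (m : ℕ) (V : Finset α) (r : α) (K : Finset α),
    V.card = m → 3 ≤ V.card → r ∈ V → K ⊆ V.erase r → K ≠ V.erase r →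
    (∑ E ∈ (edgesOf V).powerset.filter (fun E => starP r K E ∧ ¬ tcE E V),
      (-1 : ℤ) ^ E.card) = 0 := by
  intro m
  induction m using Nat.strong_induction_on with
  | _ m IH =>
  intro V r K hVm h3 hrV hKV hKne
  rcases K.eq_empty_or_nonempty with rfl | ⟨t, htK⟩
  · -- K = ∅ : vertex r is always isolated, graphs are never 2-connected
    have hiff : ∀ E ∈ (edgesOf V).powerset,
        ((starP r ∅ E ∧ ¬ tcE E V) ↔ starP r ∅ E) := by
      intro E _
      exact ⟨fun h => h.1,
        fun h => ⟨h, fun htc => not_connE_of_star_empty h (by omega) hrV htc.2.1⟩⟩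
    rw [Finset.filter_congr hiff]
    exact sum_star_zero ∅ h3 hrV
  · -- K nonempty, with distinguished element t
    have htVe := hKV htK
    have htr : t ≠ r := (Finset.mem_erase.mp htVe).1
    have htV : t ∈ V := Finset.mem_of_mem_erase htVe
    have hrt : r ≠ t := fun he => htr he.symm
    have hrtedge : ({r, t} : Finset α) ∈ edgesOf V := pair_mem_edgesOf hrV htV hrt
    rw [sum_powerset_split (edgesOf V) ({r, t} : Finset α) hrtedge _]
    have hstar_ins : ∀ E, starP r K E → starP r K (insert ({r, t} : Finset α) E) := by
      intro E hstar e he hre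
      rcases Finset.mem_insert.mp he with h1 | h1
      · subst h1
        intro z hz
        rcases Finset.mem_insert.mp hz with h2 | h2
        · exact h2 ▸ Finset.mem_insert_self _ _
        · exact (Finset.mem_singleton.mp h2) ▸ Finset.mem_insert_of_mem htK
      · exact hstar e h1 hre
    have h2nd : ((edgesOf V).erase ({r, t} : Finset α)).powerset.filter
        (fun E => ¬ (starP r K E ∧ ¬ tcE E V) ∧
          (starP r K (insert ({r, t} : Finset α) E) ∧
            ¬ tcE (insert ({r, t} : Finset α) E) V)) = ∅ := by
      refine Finset.filter_eq_empty_iff.mpr ?_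
      rintro E _ ⟨hnP, hPins⟩
      have hstarE : starP r K E := starP_mono (Finset.subset_insert _ _) hPins.1
      have htcE : tcE E V := by
        by_contra hntc
        exact hnP ⟨hstarE, hntc⟩
      exact hPins.2 (tcE_mono_E (Finset.subset_insert _ _) htcE)
    rw [h2nd, Finset.sum_empty, sub_zero]
    have hiffL : ∀ E ∈ ((edgesOf V).erase ({r, t} : Finset α)).powerset,
        (((starP r K E ∧ ¬ tcE E V) ∧
          ¬ (starP r K (insert ({r, t} : Finset α) E) ∧
            ¬ tcE (insert ({r, t} : Finset α) E) V)) ↔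
          (starP r K E ∧ ¬ tcE E V ∧ tcE (insert ({r, t} : Finset α) E) V)) := by
      intro E _
      constructor
      · rintro ⟨⟨hs, hn⟩, hni⟩
        refine ⟨hs, hn, ?_⟩
        by_contra htci
        exact hni ⟨hstar_ins E hs, htci⟩
      · rintro ⟨hs, hn, hti⟩
        exact ⟨⟨hs, hn⟩, fun hh => hh.2 hti⟩
    rw [Finset.filter_congr hiffL]
    -- the leftover family L
    set Lset := ((edgesOf V).erase ({r, t} : Finset α)).powerset.filter
      (fun E => starP r K E ∧ ¬ tcE E V ∧ tcE (insert ({r, t} : Finset α) E) V) with hLdef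
    have hLctx : ∀ E ∈ Lset, LCtx V r t E := by
      intro E hE
      rw [hLdef, Finset.mem_filter, Finset.mem_powerset] at hE
      obtain ⟨hsub, hstar, hntc, htc2⟩ := hE
      refine ⟨hrV, htV, hrt, by omega, ?_, ?_, hntc, htc2⟩
      · intro e he
        have h1 := hsub he
        have h2 := mem_edgesOf.mp (Finset.mem_of_mem_erase h1)
        exact ⟨h2.2, h2.1⟩
      · intro hmem
        exact (Finset.mem_erase.mp (hsub hmem)).1 rfl
    have hLstar : ∀ E ∈ Lset, starP r K E := by
      intro E hE
      rw [hLdef, Finset.mem_filter] at hE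
      exact hE.2.1
    have hmaps : ∀ E ∈ Lset, datOf V r E ∈ V.powerset ×ˢ V := by
      intro E hE
      have h := hLctx E hE
      have hm := cOf_isMinCut h
      rw [Finset.mem_product, Finset.mem_powerset]
      constructor
      · exact h.S_subset_V hm
      · exact LCtx.c_mem_V hm
    rw [← Finset.sum_fiberwise_of_maps_to hmaps]
    refine Finset.sum_eq_zero ?_
    rintro ⟨S, c⟩ hp
    by_cases hfib : (Lset.filter (fun E => datOf V r E = (S, c))) = ∅
    · rw [hfib, Finset.sum_empty]
    obtain ⟨E0, hE0⟩ := Finset.nonempty_of_ne_empty hfib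
    rw [Finset.mem_filter] at hE0
    obtain ⟨hE0L, hE0dat⟩ := hE0
    have hL0 := hLctx E0 hE0L
    have hm0 := cOf_isMinCut hL0
    have hdat' := hE0dat
    rw [datOf, Prod.mk.injEq] at hdat'
    obtain ⟨hS0', hc0⟩ := hdat'
    rw [hc0] at hS0'
    have hS0 : S = insert c (rcomp E0 (V.erase c) r) := hS0'.symm
    -- shape facts
    have hmc : LCtx.IsMinCut E0 V r c := hc0 ▸ hm0
    have hcS : c ∈ S := hS0 ▸ Finset.mem_insert_self _ _
    have hrS : r ∈ S := hS0 ▸ Finset.mem_insert_of_mem (hL0.r_mem_C hmc)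
    have hcr : c ≠ r := LCtx.c_ne_r hL0 hmc
    have hct : c ≠ t := LCtx.c_ne_t hL0 hmc
    have hSV : S ⊆ V := hS0 ▸ hL0.S_subset_V hmc
    have htS : t ∉ S := by
      rw [hS0]
      intro hmem
      rcases Finset.mem_insert.mp hmem with h1 | h1
      · exact hct h1.symm
      · exact hL0.cut_disj hmc.1 t h1 (hL0.t_mem_tcomp hmc.1)
    have hVS0 : V \ S = rcomp E0 (V.erase c) t := by
      rw [hS0]; exact hL0.sdiff_eq_D hmc
    -- the two factor families
    set V2 := insert c (V \ S) with hV2def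
    set Bset := (edgesOf S).powerset.filter
      (fun B => (∀ e ∈ B, r ∈ e → e ⊆ insert r (K.erase t)) ∧ tcE B S) with hBdef
    set Cset := (edgesOf V2).powerset.filter
      (fun C2 => connE C2 V2 ∧ tcE (insert ({c, t} : Finset α) C2) V2) with hCdef
    -- generic decomposition facts for any member of the fiber
    have hdecomp : ∀ E ∈ Lset, datOf V r E = (S, c) →
        GCtx V r t c S (E.filter (fun e => e ⊆ S)) (E.filter (fun e => e ⊆ V2)) ∧
        E = (E.filter (fun e => e ⊆ S)) ∪ (E.filter (fun e => e ⊆ V2)) := by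
      intro E hEL hEdat
      have hL := hLctx E hEL
      have hm := cOf_isMinCut hL
      have hdatE := hEdat
      rw [datOf, Prod.mk.injEq] at hdatE
      obtain ⟨hSE', hcE⟩ := hdatE
      rw [hcE] at hSE'
      have hmcE : LCtx.IsMinCut E V r c := hcE ▸ hm
      have hSE : S = insert c (rcomp E (V.erase c) r) := hSE'.symm
      have hVSE : V \ S = rcomp E (V.erase c) t := by
        rw [hSE]; exact hL.sdiff_eq_D hmcE
      have hstarE := hLstar E hEL
      have hrtnot : ({r, t} : Finset α) ∉ E := hL.hrtE
      constructor
      · refine ⟨hrV, htV, hrt, by omega, hSV, hrS, hcS, hcr, htS, ?_, ?_, ?_, ?_, ?_⟩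
        · -- edges of the B part
          intro e he
          rw [Finset.mem_filter] at he
          exact ⟨(hL.hE e he.1).1, he.2⟩
        · intro e he
          rw [Finset.mem_filter] at he
          exact ⟨(hL.hE e he.1).1, he.2⟩
        · -- tcE of B part
          have := hL.tcE_B hmcE
          rw [← hSE] at this
          exact this
        · have := hL.connE_C2 hmcE
          rw [← hVSE] at this
          rw [hV2def]
          exact this
        · have := hL.tcE_C2 hmcE
          rw [← hVSE] at this
          rw [hV2def]
          exact this
      · -- E is the union of its two sides
        ext e
        simp only [Finset.mem_union, Finset.mem_filter]
        constructor
        · intro he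
          rcases hL.edge_split hmcE e he with h1 | h1
          · exact Or.inl ⟨he, hSE ▸ h1⟩
          · refine Or.inr ⟨he, ?_⟩
            rw [hV2def, hVSE]
            exact h1
        · rintro (h1 | h1) <;> exact h1.1
    -- star condition of the B part
    have hBstar : ∀ E ∈ Lset, datOf V r E = (S, c) →
        ∀ e ∈ E.filter (fun e => e ⊆ S), r ∈ e → e ⊆ insert r (K.erase t) := by
      intro E hEL hEdat e he hre
      rw [Finset.mem_filter] at he
      have hsub := hLstar E hEL e he.1 hre
      intro z hz
      have h1 := hsub hz
      rcases Finset.mem_insert.mp h1 with h2 | h2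
      · exact h2 ▸ Finset.mem_insert_self _ _
      · refine Finset.mem_insert_of_mem (Finset.mem_erase.mpr ⟨?_, h2⟩)
        intro hzt
        exact htS (hzt ▸ he.2 hz)
    -- the fiber is in bijection with Bset ×ˢ Cset
    have hforward : ∀ E ∈ Lset.filter (fun E => datOf V r E = (S, c)),
        (E.filter (fun e => e ⊆ S), E.filter (fun e => e ⊆ V2)) ∈ Bset ×ˢ Cset := by
      intro E hE
      rw [Finset.mem_filter] at hE
      obtain ⟨hEL, hEdat⟩ := hE
      obtain ⟨hg, _⟩ := hdecomp E hEL hEdat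
      rw [Finset.mem_product]
      constructor
      · rw [hBdef, Finset.mem_filter, Finset.mem_powerset]
        refine ⟨?_, hBstar E hEL hEdat, hg.htcB⟩
        intro e he
        exact mem_edgesOf.mpr ⟨(hg.hB e he).2, (hg.hB e he).1⟩
      · rw [hCdef, Finset.mem_filter, Finset.mem_powerset]
        refine ⟨?_, hg.hconnC2, hg.htcC2⟩
        intro e he
        exact mem_edgesOf.mpr ⟨(hg.hC2 e he).2, (hg.hC2 e he).1⟩
    have hbackward : ∀ p ∈ Bset ×ˢ Cset,
        (p.1 ∪ p.2) ∈ Lset.filter (fun E => datOf V r E = (S, c)) := by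
      rintro ⟨B, C2⟩ hp2
      rw [Finset.mem_product] at hp2
      obtain ⟨hBmem, hCmem⟩ := hp2
      rw [hBdef, Finset.mem_filter, Finset.mem_powerset] at hBmem
      rw [hCdef, Finset.mem_filter, Finset.mem_powerset] at hCmem
      obtain ⟨hBsub, hBstar', hBtc⟩ := hBmem
      obtain ⟨hCsub, hCconn, hCtc⟩ := hCmem
      have hg : GCtx V r t c S B C2 := by
        refine ⟨hrV, htV, hrt, by omega, hSV, hrS, hcS, hcr, htS, ?_, ?_, hBtc, hCconn, hCtc⟩
        · intro e he
          have := mem_edgesOf.mp (hBsub he)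
          exact ⟨this.2, this.1⟩
        · intro e he
          have := mem_edgesOf.mp (hCsub he)
          exact ⟨this.2, this.1⟩
      have hstarU : starP r K (B ∪ C2) := by
        intro e he hre
        rcases Finset.mem_union.mp he with h1 | h1
        · have := hBstar' e h1 hre
          intro z hz
          rcases Finset.mem_insert.mp (this hz) with h2 | h2
          · exact h2 ▸ Finset.mem_insert_self _ _
          · exact Finset.mem_insert_of_mem (Finset.mem_of_mem_erase h2)
        · exfalso
          have := (hg.hC2 e h1).2 hre
          exact hg.hr2 this
      have hELmem : (B ∪ C2) ∈ Lset := by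
        rw [hLdef, Finset.mem_filter, Finset.mem_powerset]
        refine ⟨?_, hstarU, hg.not_tcE, hg.tcE_glue⟩
        intro e he
        refine Finset.mem_erase.mpr ⟨?_, ?_⟩
        · intro heq
          exact hg.rt_not_mem (heq ▸ he)
        · exact mem_edgesOf.mpr ⟨(hg.hE e he).2, (hg.hE e he).1⟩
      rw [Finset.mem_filter]
      refine ⟨hELmem, ?_⟩
      have hLg := hg.lctx
      have hmg := hg.isMinCut
      have hcOfg : cOf V r (B ∪ C2) = c := cOf_eq hLg hmg
      rw [datOf, hcOfg]
      have : rcomp (B ∪ C2) (V.erase c) r = S.erase c := hg.rcomp_eq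
      rw [this, Finset.insert_erase hcS]
    -- sum over the fiber equals the product of the two sums
    have hprod : (∑ E ∈ Lset.filter (fun E => datOf V r E = (S, c)), (-1 : ℤ) ^ E.card)
        = (∑ B ∈ Bset, (-1 : ℤ) ^ B.card) * (∑ C2 ∈ Cset, (-1 : ℤ) ^ C2.card) := by
      rw [Finset.sum_mul_sum]
      rw [← Finset.sum_product']
      refine Finset.sum_nbij'
        (fun E => (E.filter (fun e => e ⊆ S), E.filter (fun e => e ⊆ V2)))
        (fun p => p.1 ∪ p.2) hforward hbackward ?_ ?_ ?_
      · -- left inverse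
        intro E hE
        rw [Finset.mem_filter] at hE
        obtain ⟨hg, hunion⟩ := hdecomp E hE.1 hE.2
        exact hunion.symm
      · -- right inverse
        rintro ⟨B, C2⟩ hp2
        have hmem := hbackward _ hp2
        rw [Finset.mem_filter] at hmem
        obtain ⟨hg, _⟩ := hdecomp _ hmem.1 hmem.2
        have hfs : (B ∪ C2).filter (fun e => e ⊆ S) = B := by
          rw [Finset.mem_product] at hp2
          obtain ⟨hBmem, hCmem⟩ := hp2
          rw [hBdef, Finset.mem_filter, Finset.mem_powerset] at hBmem
          rw [hCdef, Finset.mem_filter, Finset.mem_powerset] at hCmem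
          have hg2 : GCtx V r t c S B C2 := by
            refine ⟨hrV, htV, hrt, by omega, hSV, hrS, hcS, hcr, htS, ?_, ?_,
              hBmem.2.2, hCmem.2.1, hCmem.2.2⟩
            · intro e he
              have := mem_edgesOf.mp (hBmem.1 he)
              exact ⟨this.2, this.1⟩
            · intro e he
              have := mem_edgesOf.mp (hCmem.1 he)
              exact ⟨this.2, this.1⟩
          exact hg2.filter_S
        have hfv : (B ∪ C2).filter (fun e => e ⊆ V2) = C2 := by
          rw [Finset.mem_product] at hp2
          obtain ⟨hBmem, hCmem⟩ := hp2
          rw [hBdef, Finset.mem_filter, Finset.mem_powerset] at hBmem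
          rw [hCdef, Finset.mem_filter, Finset.mem_powerset] at hCmem
          have hg2 : GCtx V r t c S B C2 := by
            refine ⟨hrV, htV, hrt, by omega, hSV, hrS, hcS, hcr, htS, ?_, ?_,
              hBmem.2.2, hCmem.2.1, hCmem.2.2⟩
            · intro e he
              have := mem_edgesOf.mp (hBmem.1 he)
              exact ⟨this.2, this.1⟩
            · intro e he
              have := mem_edgesOf.mp (hCmem.1 he)
              exact ⟨this.2, this.1⟩
          exact hg2.filter_V2
        show ((B ∪ C2).filter (fun e => e ⊆ S), (B ∪ C2).filter (fun e => e ⊆ V2)) = (B, C2)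
        rw [hfs, hfv]
      · -- values agree
        intro E hE
        rw [Finset.mem_filter] at hE
        obtain ⟨hg, hunion⟩ := hdecomp E hE.1 hE.2
        have hcard : E.card = (E.filter (fun e => e ⊆ S)).card
            + (E.filter (fun e => e ⊆ V2)).card := by
          conv_lhs => rw [hunion]
          exact hg.card_eq
        rw [hcard, pow_add]
    rw [hprod]
    -- now kill one of the two factors
    have hScardle : S.card ≤ m - 1 := by
      have hsub : S ⊆ V.erase t := fun x hx =>
        Finset.mem_erase.mpr ⟨fun he => htS (he ▸ hx), hSV hx⟩
      have := Finset.card_le_card hsub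
      rw [Finset.card_erase_of_mem htV, hVm] at this
      exact this
    have hV2card : V2.card = m - S.card + 1 := by
      rw [hV2def, Finset.card_insert_of_notMem (fun hx => (Finset.mem_sdiff.mp hx).2 hcS),
        Finset.card_sdiff_of_subset hSV, hVm]
    by_cases hSsmall : S.card ≤ m - 2
    · -- kill the C factor by toggling the ct edge
      have hV2c3 : 3 ≤ V2.card := by
        have hcS2 : 2 ≤ S.card := by
          have : ({c, r} : Finset α) ⊆ S := by
            intro z hz
            rcases Finset.mem_insert.mp hz with h1 | h1
            · exact h1 ▸ hcS
            · exact (Finset.mem_singleton.mp h1) ▸ hrS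
          have := Finset.card_le_card this
          rw [Finset.card_pair hcr] at this
          exact this
        omega
      have hcV2 : c ∈ V2 := Finset.mem_insert_self _ _
      have htV2 : t ∈ V2 := Finset.mem_insert_of_mem (Finset.mem_sdiff.mpr ⟨htV, htS⟩)
      have hctedge : ({c, t} : Finset α) ∈ edgesOf V2 := pair_mem_edgesOf hcV2 htV2 hct
      have hCzero : (∑ C2 ∈ Cset, (-1 : ℤ) ^ C2.card) = 0 := by
        rw [hCdef]
        refine sum_powerset_toggle_zero (edgesOf V2) ({c, t} : Finset α) hctedge _ ?_
        intro C2 hC2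
        rw [Finset.mem_powerset] at hC2
        have hctnot : ({c, t} : Finset α) ∉ C2 := fun hmem =>
          (Finset.mem_erase.mp (hC2 hmem)).1 rfl
        have hidem : insert ({c, t} : Finset α) (insert ({c, t} : Finset α) C2)
            = insert ({c, t} : Finset α) C2 := Finset.insert_idem _ _
        constructor
        · rintro ⟨hconn, htc⟩
          refine ⟨connE_mono_E (Finset.subset_insert _ _) hconn, ?_⟩
          rw [hidem]
          exact htc
        · rintro ⟨hconn, htc⟩
          rw [hidem] at htc
          refine ⟨?_, htc⟩
          have := connE_erase_edge htc hV2c3 hcV2 htV2 hct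
          rwa [Finset.erase_insert hctnot] at this
      rw [hCzero, mul_zero]
    · -- S has m-1 vertices : kill the B factor using the induction hypothesis
      have hScard : S.card = m - 1 := by omega
      set K' := (K.erase t) ∩ (S.erase r) with hK'def
      have hBiff : ∀ B ∈ (edgesOf S).powerset,
          ((∀ e ∈ B, r ∈ e → e ⊆ insert r (K.erase t)) ∧ tcE B S ↔
            starP r K' B ∧ tcE B S) := by
        intro B hB
        rw [Finset.mem_powerset] at hB
        constructor
        · rintro ⟨hst, htc⟩
          refine ⟨?_, htc⟩
          intro e he hre
          intro z hz
          have h1 := hst e he hre hz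
          rcases Finset.mem_insert.mp h1 with h2 | h2
          · exact h2 ▸ Finset.mem_insert_self _ _
          · refine Finset.mem_insert_of_mem ?_
            rw [hK'def]
            refine Finset.mem_inter.mpr ⟨h2, Finset.mem_erase.mpr ⟨?_, ?_⟩⟩
            · intro hzr
              exact (Finset.mem_erase.mp (hKV (Finset.mem_of_mem_erase h2))).1 hzr
            · exact (mem_edgesOf.mp (hB he)).1 hz
        · rintro ⟨hst, htc⟩
          refine ⟨?_, htc⟩
          intro e he hre z hz
          have h1 := hst e he hre hz
          rcases Finset.mem_insert.mp h1 with h2 | h2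
          · exact h2 ▸ Finset.mem_insert_self _ _
          · rw [hK'def] at h2
            exact Finset.mem_insert_of_mem (Finset.mem_inter.mp h2).1
      have hBzero : (∑ B ∈ Bset, (-1 : ℤ) ^ B.card) = 0 := by
        rw [hBdef, Finset.filter_congr hBiff]
        by_cases hK' : K' = ∅
        · -- no allowed neighbours of r : family is empty
          have : (edgesOf S).powerset.filter (fun B => starP r K' B ∧ tcE B S) = ∅ := by
            refine Finset.filter_eq_empty_iff.mpr ?_
            rintro B _ ⟨hst, htc⟩
            rw [hK'] at hst
            exact not_connE_of_star_empty hst htc.1 hrS htc.2.1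
          rw [this, Finset.sum_empty]
        · -- use the induction hypothesis on S
          have hK'sub : K' ⊆ S.erase r := by
            rw [hK'def]; exact Finset.inter_subset_right
          have hKcard : K.card ≤ m - 2 := by
            have h1 : K ⊂ V.erase r := Finset.ssubset_iff_subset_ne.mpr ⟨hKV, hKne⟩
            have h2 := Finset.card_lt_card h1
            rw [Finset.card_erase_of_mem hrV, hVm] at h2
            omega
          have hK'card : K'.card ≤ m - 3 := by
            have h1 : K' ⊆ K.erase t := by rw [hK'def]; exact Finset.inter_subset_left
            have h2 := Finset.card_le_card h1
            rw [Finset.card_erase_of_mem htK] at h2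
            omega
          have hK'ne : K' ≠ S.erase r := by
            intro he
            have h1 : (S.erase r).card = m - 2 := by
              rw [Finset.card_erase_of_mem hrS, hScard]
              omega
            rw [he, h1] at hK'card
            obtain ⟨x, hx⟩ := Finset.nonempty_iff_ne_empty.mpr hK'
            have : 0 < K'.card := Finset.card_pos.mpr ⟨x, hx⟩
            rw [he, h1] at this
            omega
          have hS3 : 3 ≤ S.card := by
            obtain ⟨x, hx⟩ := Finset.nonempty_iff_ne_empty.mpr hK'
            have hxS := hK'sub hx
            have h1 : 1 ≤ K'.card := Finset.card_pos.mpr ⟨x, hx⟩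
            -- S.erase r strictly contains K', so has ≥ 2 elements
            have h2 : K' ⊂ S.erase r := Finset.ssubset_iff_subset_ne.mpr ⟨hK'sub, hK'ne⟩
            have h3 := Finset.card_lt_card h2
            have h4 : (S.erase r).card = S.card - 1 := Finset.card_erase_of_mem hrS
            have h5 : 1 ≤ S.card := Finset.card_pos.mpr ⟨r, hrS⟩
            omega
          have hIH := IH S.card (by omega) S r K' rfl hS3 hrS hK'sub hK'ne
          have hsplit := Finset.sum_filter_add_sum_filter_not
            ((edgesOf S).powerset.filter (fun B => starP r K' B))
            (fun B => tcE B S) (fun B => (-1 : ℤ) ^ B.card)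
          rw [Finset.filter_filter, Finset.filter_filter] at hsplit
          have hstar_tot := sum_star_zero (S := S) (r := r) K' hS3 hrS
          have hcongr1 : (edgesOf S).powerset.filter (fun B => starP r K' B ∧ tcE B S)
              = (edgesOf S).powerset.filter (fun a => starP r K' a ∧ tcE a S) := rfl
          have hcongr2 : (edgesOf S).powerset.filter (fun a => starP r K' a ∧ ¬ tcE a S)
              = (edgesOf S).powerset.filter (fun B => starP r K' B ∧ ¬ tcE B S) := rfl
          rw [hcongr1]
          have : (∑ B ∈ (edgesOf S).powerset.filter (fun a => starP r K' a ∧ tcE a S),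
              (-1 : ℤ) ^ B.card)
              + ∑ B ∈ (edgesOf S).powerset.filter (fun a => starP r K' a ∧ ¬ tcE a S),
                (-1 : ℤ) ^ B.card = 0 := by
            rw [hsplit]
            exact hstar_tot
          rw [hcongr2] at this
          rw [hIH] at this
          linarith
      rw [hBzero, zero_mul]

end TCaux


section Bridge

variable {n : ℕ} {E : Finset (Finset (Fin n))}

lemma graphOf_adj {a b : Fin n} : (graphOf n E).Adj a b ↔ TCaux.adjE E a b := Iff.rfl

lemma walk_to_reach {u v : Fin n} (w : (graphOf n E).Walk u v) :
    TCaux.reachE E Finset.univ u v := by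
  induction w with
  | nil => exact .refl
  | cons h p ih =>
    exact Relation.ReflTransGen.head ⟨Finset.mem_univ _, Finset.mem_univ _, h⟩ ih

lemma reach_to_reachable {u v : Fin n} (h : TCaux.reachE E Finset.univ u v) :
    (graphOf n E).Reachable u v := by
  induction h with
  | refl => exact SimpleGraph.Reachable.refl _
  | tail _ hstep ih => exact ih.trans (SimpleGraph.Adj.reachable hstep.2.2)

lemma connected_iff_connE (hn : 0 < n) :
    (graphOf n E).Connected ↔ TCaux.connE E Finset.univ := by
  constructor
  · intro h
    refine ⟨⟨⟨0, hn⟩, Finset.mem_univ _⟩, fun u _ v _ => ?_⟩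
    exact (h.preconnected u v).elim walk_to_reach
  · intro h
    rw [SimpleGraph.connected_iff]
    exact ⟨fun u v => reach_to_reachable (h.2 u (Finset.mem_univ _) v (Finset.mem_univ _)),
      ⟨⟨0, hn⟩⟩⟩

lemma mem_compl_singleton {v x : Fin n} : x ∈ ({v}ᶜ : Set (Fin n)) ↔ x ≠ v := by
  simp

lemma induce_walk_to_reach {v : Fin n} {a b : ↥({v}ᶜ : Set (Fin n))}
    (w : ((graphOf n E).induce ({v}ᶜ : Set (Fin n))).Walk a b) :
    TCaux.reachE E (Finset.univ.erase v) a.1 b.1 := by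
  induction w with
  | nil => exact .refl
  | cons h p ih =>
    rename_i x y _
    have hadj : (graphOf n E).Adj x.1 y.1 := h
    have hx : x.1 ∈ Finset.univ.erase v :=
      Finset.mem_erase.mpr ⟨mem_compl_singleton.mp x.2, Finset.mem_univ _⟩
    have hy : y.1 ∈ Finset.univ.erase v :=
      Finset.mem_erase.mpr ⟨mem_compl_singleton.mp y.2, Finset.mem_univ _⟩
    exact Relation.ReflTransGen.head ⟨hx, hy, hadj⟩ ih

lemma reach_to_induce_reachable {v : Fin n} {x y : Fin n}
    (hx : x ∈ Finset.univ.erase v)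
    (h : TCaux.reachE E (Finset.univ.erase v) x y) (hy : y ∈ Finset.univ.erase v) :
    ((graphOf n E).induce ({v}ᶜ : Set (Fin n))).Reachable
      ⟨x, mem_compl_singleton.mpr (Finset.mem_erase.mp hx).1⟩
      ⟨y, mem_compl_singleton.mpr (Finset.mem_erase.mp hy).1⟩ := by
  induction h with
  | refl => exact SimpleGraph.Reachable.refl _
  | @tail p q hp hstep ih =>
    have hpm : p ∈ Finset.univ.erase v := hstep.1
    have hadjG : (graphOf n E).Adj p q := hstep.2.2
    have hadj : ((graphOf n E).induce ({v}ᶜ : Set (Fin n))).Adj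
        ⟨p, mem_compl_singleton.mpr (Finset.mem_erase.mp hpm).1⟩
        ⟨q, mem_compl_singleton.mpr (Finset.mem_erase.mp hstep.2.1).1⟩ := hadjG
    exact (ih hpm).trans hadj.reachable

lemma induce_connected_iff_connE (hn2 : 2 ≤ n) (v : Fin n) :
    ((graphOf n E).induce ({v}ᶜ : Set (Fin n))).Connected ↔
      TCaux.connE E (Finset.univ.erase v) := by
  constructor
  · intro h
    obtain ⟨u⟩ := h.nonempty
    refine ⟨⟨u.1, Finset.mem_erase.mpr ⟨mem_compl_singleton.mp u.2, Finset.mem_univ _⟩⟩,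
      fun x hx y hy => ?_⟩
    have hx' : x ∈ ({v}ᶜ : Set (Fin n)) :=
      mem_compl_singleton.mpr (Finset.mem_erase.mp hx).1
    have hy' : y ∈ ({v}ᶜ : Set (Fin n)) :=
      mem_compl_singleton.mpr (Finset.mem_erase.mp hy).1
    exact (h.preconnected ⟨x, hx'⟩ ⟨y, hy'⟩).elim induce_walk_to_reach
  · intro h
    rw [SimpleGraph.connected_iff]
    obtain ⟨w, hw⟩ := h.1
    constructor
    · rintro ⟨x, hx⟩ ⟨y, hy⟩
      have hx2 : x ∈ Finset.univ.erase v :=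
        Finset.mem_erase.mpr ⟨mem_compl_singleton.mp hx, Finset.mem_univ _⟩
      have hy2 : y ∈ Finset.univ.erase v :=
        Finset.mem_erase.mpr ⟨mem_compl_singleton.mp hy, Finset.mem_univ _⟩
      exact reach_to_induce_reachable hx2 (h.2 x hx2 y hy2) hy2
    · exact ⟨⟨w, mem_compl_singleton.mpr (Finset.mem_erase.mp hw).1⟩⟩

lemma isTwoConn_iff_tcE (hn : 2 ≤ n) :
    IsTwoConn (graphOf n E) ↔ TCaux.tcE E Finset.univ := by
  have hcard : Fintype.card (Fin n) = (Finset.univ : Finset (Fin n)).card := by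
    simp
  constructor
  · rintro ⟨h1, h2, h3⟩
    refine ⟨by simpa using h1, (connected_iff_connE (by omega)).mp h2, ?_⟩
    intro v _
    exact (induce_connected_iff_connE hn v).mp (h3 v)
  · rintro ⟨h1, h2, h3⟩
    refine ⟨by simpa using h1, (connected_iff_connE (by omega)).mpr h2, ?_⟩
    intro v
    exact (induce_connected_iff_connE hn v).mpr (h3 v (Finset.mem_univ _))

end Bridge


open scoped Classical in
/-- For `n ≥ 3` and `2 ≤ k ≤ n-1`, the sum of `(-1)^{|E|}` over all edge sets of
not 2-connected graphs on `[n]` in which every edge containing the vertex `1` has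
its other endpoint in `{2,…,k}` equals `0` (the complex `Δ(k)` is contractible). -/
theorem euler_char_delta_k (n k : ℕ) (hn : 3 ≤ n) (hk : 2 ≤ k) (hkn : k ≤ n - 1) :
    ∑ E ∈ Finset.univ.filter
        (fun E : Finset (Finset (Fin n)) =>
          IsGraphEdges n E ∧
          ¬ IsTwoConn (graphOf n E) ∧
          ∀ e ∈ E, (⟨0, by omega⟩ : Fin n) ∈ e →
            ∀ x ∈ e, x ≠ (⟨0, by omega⟩ : Fin n) → 1 ≤ x.val ∧ x.val ≤ k - 1),
      (-1 : ℤ) ^ E.card = 0 := by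
  classical
  have hr0 : (0 : ℕ) < n := by omega
  let r : Fin n := ⟨0, hr0⟩
  let K : Finset (Fin n) := Finset.univ.filter (fun x : Fin n => 1 ≤ x.val ∧ x.val ≤ k - 1)
  have hKsub : K ⊆ Finset.univ.erase r := by
    intro x hx
    obtain ⟨-, hx1, _⟩ := Finset.mem_filter.mp hx
    refine Finset.mem_erase.mpr ⟨?_, Finset.mem_univ _⟩
    intro he
    rw [he] at hx1
    simp [r] at hx1
  have hKne : K ≠ Finset.univ.erase r := by
    intro heq
    have hy : (⟨n - 1, by omega⟩ : Fin n) ∈ Finset.univ.erase r := by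
      refine Finset.mem_erase.mpr ⟨?_, Finset.mem_univ _⟩
      intro he
      have := congrArg Fin.val he
      simp [r] at this
      omega
    rw [← heq] at hy
    obtain ⟨-, -, h2⟩ := Finset.mem_filter.mp hy
    simp only at h2
    omega
  have hfe : Finset.univ.filter
        (fun E : Finset (Finset (Fin n)) =>
          IsGraphEdges n E ∧
          ¬ IsTwoConn (graphOf n E) ∧
          ∀ e ∈ E, (⟨0, by omega⟩ : Fin n) ∈ e →
            ∀ x ∈ e, x ≠ (⟨0, by omega⟩ : Fin n) → 1 ≤ x.val ∧ x.val ≤ k - 1)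
      = (TCaux.edgesOf (Finset.univ : Finset (Fin n))).powerset.filter
          (fun E => TCaux.starP r K E ∧ ¬ TCaux.tcE E Finset.univ) := by
    ext E
    simp only [Finset.mem_filter, Finset.mem_univ, true_and, Finset.mem_powerset]
    constructor
    · rintro ⟨hedges, hntc, hstar⟩
      refine ⟨?_, ?_, ?_⟩
      · intro e he
        exact TCaux.mem_edgesOf.mpr ⟨Finset.subset_univ e, hedges e he⟩
      · intro e he hre z hz
        by_cases hzr : z = r
        · exact hzr ▸ Finset.mem_insert_self _ _
        · obtain ⟨h1, h2⟩ := hstar e he hre z hz hzr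
          exact Finset.mem_insert_of_mem
            (Finset.mem_filter.mpr ⟨Finset.mem_univ _, h1, h2⟩)
      · intro htc
        exact hntc ((isTwoConn_iff_tcE (by omega)).mpr htc)
    · rintro ⟨hsub, hstar, hntc⟩
      refine ⟨?_, ?_, ?_⟩
      · intro e he
        exact (TCaux.mem_edgesOf.mp (hsub he)).2
      · intro hIs
        exact hntc ((isTwoConn_iff_tcE (by omega)).mp hIs)
      · intro e he hre x hx hxr
        have h1 := hstar e he hre hx
        rcases Finset.mem_insert.mp h1 with h2 | h2
        · exact absurd h2 hxr
        · exact (Finset.mem_filter.mp h2).2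
  rw [hfe]
  refine TCaux.main_sum n Finset.univ r K ?_ ?_ (Finset.mem_univ _) hKsub hKne
  · simp
  · simp
    omega
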